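/- arXiv:1908.02801 — 7 statements merged into one kernel-verified Lean document; each statement's English description precedes it below -/
import Mathlib

section
/- Let d ≥ 2 and let C_d := {v ∈ B_d : v(0) = 1}. If C_d is path-connected, then B_d is path-connected. -/
open scoped ComplexConjugate

/-- The translation operator `T` on `ℂ^d = (ZMod d → ℂ)`: `(T v) j = v (j - 1)`. -/
noncomputable def gT (d : ℕ) : (ZMod d → ℂ) ≃ₗ[ℂ] (ZMod d → ℂ) :=
  LinearEquiv.funCongrLeft ℂ ℂ (Equiv.subRight (1 : ZMod d))

/-- The modulation operator `M` on `ℂ^d`: `(M v) j = ω ^ j * v j` with `ω = exp (2 π i / d)`. -/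
noncomputable def gM (d : ℕ) : (ZMod d → ℂ) ≃ₗ[ℂ] (ZMod d → ℂ) :=
  LinearEquiv.piCongrRight fun j =>
    LinearEquiv.smulOfNeZero ℂ ℂ (Complex.exp (2 * Real.pi * Complex.I / d) ^ j.val)
      (pow_ne_zero _ (Complex.exp_ne_zero _))

/-- The standard inner product on `ℂ^d`, conjugate-linear in the first argument. -/
noncomputable def inn {d : ℕ} [NeZero d] (u w : ZMod d → ℂ) : ℂ :=
  ∑ j : ZMod d, conj (u j) * w j

/-- The Gabor system `G(v) = {M^ℓ T^k v}` is `(α, β)`-biangular: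
`|⟨v, T^k v⟩|² = α` for `k ∈ {1,…,d-1}` and `|⟨v, M^ℓ T^k v⟩|² = β` for
`k ∈ {0,…,d-1}`, `ℓ ∈ {1,…,d-1}`. -/
def Biangular (d : ℕ) [NeZero d] (v : ZMod d → ℂ) (α β : ℝ) : Prop :=
  (∀ k : ℕ, 1 ≤ k → k ≤ d - 1 → ‖inn v ((gT d ^ k) v)‖ ^ 2 = α) ∧
  (∀ k ℓ : ℕ, k ≤ d - 1 → 1 ≤ ℓ → ℓ ≤ d - 1 →
    ‖inn v ((gM d ^ ℓ) ((gT d ^ k) v))‖ ^ 2 = β)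

/-- `B_d`: the set of nonzero `v ∈ ℂ^d` whose Gabor system is biangular. -/
def Bset (d : ℕ) [NeZero d] : Set (ZMod d → ℂ) :=
  {v | v ≠ 0 ∧ ∃ α β : ℝ, Biangular d v α β}

/-- The root of unity `ω`. -/
noncomputable def gw (d : ℕ) : ℂ := Complex.exp (2 * Real.pi * Complex.I / d)

lemma gw_pow_d (d : ℕ) [NeZero d] : gw d ^ d = 1 :=
  (Complex.isPrimitiveRoot_exp d (NeZero.ne d)).pow_eq_one

lemma gw_pow_mod (d : ℕ) [NeZero d] (a : ℕ) : gw d ^ a = gw d ^ (a % d) := by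
  conv_lhs => rw [← Nat.div_add_mod a d]
  rw [pow_add, pow_mul, gw_pow_d, one_pow, one_mul]

lemma gw_pow_congr (d : ℕ) [NeZero d] {a b : ℕ} (h : a % d = b % d) :
    gw d ^ a = gw d ^ b := by
  rw [gw_pow_mod d a, gw_pow_mod d b, h]

lemma abs_gw (d : ℕ) : ‖gw d‖ = 1 := by
  have : (2 * (Real.pi : ℂ) * Complex.I / d) = ((2 * Real.pi / d : ℝ) : ℂ) * Complex.I := by
    push_cast; ring
  rw [gw, this, Complex.norm_exp_ofReal_mul_I]

lemma gT_apply (d : ℕ) (v : ZMod d → ℂ) (j : ZMod d) : gT d v j = v (j - 1) := rfl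

lemma gM_apply (d : ℕ) (v : ZMod d → ℂ) (j : ZMod d) : gM d v j = gw d ^ j.val * v j := rfl

lemma gT_pow_apply (d k : ℕ) (v : ZMod d → ℂ) (j : ZMod d) :
    (gT d ^ k) v j = v (j - (k : ZMod d)) := by
  induction k generalizing v j with
  | zero => simp
  | succ k ih =>
    have : (gT d ^ (k + 1)) v = (gT d ^ k) (gT d v) := by
      rw [pow_succ]; rfl
    rw [this, ih, gT_apply]
    congr 1
    push_cast
    ring

lemma gM_pow_apply (d ℓ : ℕ) (v : ZMod d → ℂ) (j : ZMod d) :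
    (gM d ^ ℓ) v j = gw d ^ (ℓ * j.val) * v j := by
  induction ℓ generalizing v with
  | zero => simp
  | succ ℓ ih =>
    have : (gM d ^ (ℓ + 1)) v = (gM d ^ ℓ) (gM d v) := by
      rw [pow_succ]; rfl
    rw [this, ih, gM_apply]
    rw [← mul_assoc, ← pow_add]
    ring_nf

lemma inn_smul_left {d : ℕ} [NeZero d] (c : ℂ) (u w : ZMod d → ℂ) :
    inn (c • u) w = conj c * inn u w := by
  simp [inn, Finset.mul_sum, mul_assoc]

lemma inn_smul_right {d : ℕ} [NeZero d] (c : ℂ) (u w : ZMod d → ℂ) :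
    inn u (c • w) = c * inn u w := by
  simp only [inn, Pi.smul_apply, smul_eq_mul, Finset.mul_sum]
  refine Finset.sum_congr rfl fun j _ => by ring

lemma gT_inn {d : ℕ} [NeZero d] (u w : ZMod d → ℂ) :
    inn (gT d u) (gT d w) = inn u w := by
  unfold inn
  exact Fintype.sum_equiv (Equiv.subRight (1 : ZMod d)) _ _ (fun j => rfl)

lemma gT_pow_comm (d k : ℕ) (v : ZMod d → ℂ) :
    (gT d ^ k) (gT d v) = gT d ((gT d ^ k) v) := by
  funext j
  rw [gT_pow_apply, gT_apply, gT_apply, gT_pow_apply, sub_right_comm]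

lemma val_succ (d : ℕ) (hd : 2 ≤ d) [NeZero d] (i : ZMod d) :
    (i + 1).val = (i.val + 1) % d := by
  haveI : Fact (1 < d) := ⟨hd⟩
  rw [ZMod.val_add, ZMod.val_one]

lemma gM_pow_gT (d : ℕ) (hd : 2 ≤ d) [NeZero d] (ℓ : ℕ) (w : ZMod d → ℂ) :
    (gM d ^ ℓ) (gT d w) = gw d ^ ℓ • gT d ((gM d ^ ℓ) w) := by
  funext j
  simp only [gM_pow_apply, gT_apply, Pi.smul_apply, smul_eq_mul, gM_pow_apply]
  rw [← mul_assoc, ← pow_add]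
  congr 1
  apply gw_pow_congr
  have h1 : j.val = ((j - 1).val + 1) % d := by
    conv_lhs => rw [show j = (j - 1) + 1 by ring]
    exact val_succ d hd (j - 1)
  calc ℓ * j.val % d = ℓ * (((j - 1).val + 1) % d) % d := by rw [← h1]
    _ = ℓ * ((j - 1).val + 1) % d := (Nat.ModEq.mul_left ℓ (Nat.mod_modEq _ d))
    _ = (ℓ + ℓ * (j - 1).val) % d := by ring_nf

lemma biangular_gT (d : ℕ) (hd : 2 ≤ d) [NeZero d] {v : ZMod d → ℂ} {α β : ℝ}
    (h : Biangular d v α β) : Biangular d (gT d v) α β := by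
  obtain ⟨h1, h2⟩ := h
  constructor
  · intro k hk1 hk2
    rw [gT_pow_comm, gT_inn]
    exact h1 k hk1 hk2
  · intro k ℓ hk hl1 hl2
    rw [gT_pow_comm, gM_pow_gT d hd, inn_smul_right, norm_mul, norm_pow, abs_gw, one_pow,
      one_mul, gT_inn]
    exact h2 k ℓ hk hl1 hl2

lemma biangular_smul (d : ℕ) [NeZero d] {v : ZMod d → ℂ} {α β : ℝ} (c : ℂ)
    (h : Biangular d v α β) :
    Biangular d (c • v) (‖c‖ ^ 4 * α) (‖c‖ ^ 4 * β) := by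
  obtain ⟨h1, h2⟩ := h
  constructor
  · intro k hk1 hk2
    have h' : ‖inn (c • v) ((gT d ^ k) (c • v))‖ =
        ‖c‖ ^ 2 * ‖inn v ((gT d ^ k) v)‖ := by
      rw [map_smul, inn_smul_right, inn_smul_left, norm_mul, norm_mul, Complex.norm_conj]
      ring
    rw [h', ← h1 k hk1 hk2]
    ring
  · intro k ℓ hk hl1 hl2
    have h' : ‖inn (c • v) ((gM d ^ ℓ) ((gT d ^ k) (c • v)))‖ =
        ‖c‖ ^ 2 * ‖inn v ((gM d ^ ℓ) ((gT d ^ k) v))‖ := by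
      rw [map_smul, map_smul, inn_smul_right, inn_smul_left, norm_mul, norm_mul,
        Complex.norm_conj]
      ring
    rw [h', ← h2 k ℓ hk hl1 hl2]
    ring

lemma bset_smul (d : ℕ) [NeZero d] {v : ZMod d → ℂ} (hv : v ∈ Bset d) {c : ℂ} (hc : c ≠ 0) :
    c • v ∈ Bset d := by
  obtain ⟨hv0, α, β, hB⟩ := hv
  exact ⟨smul_ne_zero hc hv0, _, _, biangular_smul d c hB⟩

lemma bset_gT (d : ℕ) (hd : 2 ≤ d) [NeZero d] {v : ZMod d → ℂ} (hv : v ∈ Bset d) :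
    gT d v ∈ Bset d := by
  obtain ⟨hv0, α, β, hB⟩ := hv
  refine ⟨?_, α, β, biangular_gT d hd hB⟩
  intro h0
  apply hv0
  funext j
  have := congrFun h0 (j + 1)
  simpa [gT_apply] using this

lemma bset_gT_pow (d : ℕ) (hd : 2 ≤ d) [NeZero d] (m : ℕ) {v : ZMod d → ℂ}
    (hv : v ∈ Bset d) : (gT d ^ m) v ∈ Bset d := by
  induction m generalizing v with
  | zero => simpa using hv
  | succ m ih =>
    have : (gT d ^ (m + 1)) v = (gT d ^ m) (gT d v) := by rw [pow_succ]; rfl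
    rw [this]
    exact ih (bset_gT d hd hv)

lemma sum_pow_val (d : ℕ) [NeZero d] (x : ℂ) :
    ∑ j : ZMod d, x ^ (ZMod.val j) = ∑ i ∈ Finset.range d, x ^ i := by
  refine Finset.sum_bij' (fun (j : ZMod d) _ => j.val) (fun (i : ℕ) _ => (i : ZMod d))
    ?_ ?_ ?_ ?_ ?_
  · intro j _; exact Finset.mem_range.mpr (ZMod.val_lt j)
  · intro i _; exact Finset.mem_univ _
  · intro j _; exact ZMod.natCast_rightInverse j
  · intro i hi; exact ZMod.val_cast_of_lt (Finset.mem_range.mp hi)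
  · intro j _; rfl

/-- The all-ones vector is biangular. -/
lemma biangular_ones (d : ℕ) [NeZero d] (hd : 2 ≤ d) :
    Biangular d (fun _ => (1 : ℂ)) ((d : ℝ) ^ 2) 0 := by
  constructor
  · intro k _ _
    have : inn (fun _ => (1 : ℂ)) ((gT d ^ k) (fun _ => (1 : ℂ))) = (d : ℂ) := by
      simp only [inn, gT_pow_apply, map_one, one_mul]
      simp [ZMod.card]
    rw [this]
    simp
  · intro k ℓ hk hl1 hl2
    have hx1 : gw d ^ ℓ ≠ 1 := by
      refine (Complex.isPrimitiveRoot_exp d (NeZero.ne d)).pow_ne_one_of_pos_of_lt (by omega) ?_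
      omega
    have : inn (fun _ => (1 : ℂ)) ((gM d ^ ℓ) ((gT d ^ k) (fun _ => (1 : ℂ)))) = 0 := by
      simp only [inn, gM_pow_apply, gT_pow_apply, map_one, one_mul, mul_one]
      have : ∀ j : ZMod d, gw d ^ (ℓ * j.val) = (gw d ^ ℓ) ^ j.val := fun j => by
        rw [← pow_mul]
      simp only [this]
      rw [sum_pow_val, geom_sum_eq hx1, ← pow_mul, mul_comm ℓ d, pow_mul, gw_pow_d, one_pow,
        sub_self, zero_div]
    rw [this]
    simp

/-- if `C_d = {v ∈ B_d : v 0 = 1}` is path-connected then so is `B_d`. -/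
theorem bset_pathConnected_of_cset (d : ℕ) [NeZero d] (hd : 2 ≤ d)
    (h : IsPathConnected {v ∈ Bset d | v 0 = 1}) :
    IsPathConnected (Bset d) := by
  set e : ZMod d → ℂ := fun _ => 1 with he_def
  have heB : e ∈ Bset d := by
    refine ⟨?_, _, _, biangular_ones d hd⟩
    intro h0
    have := congrFun h0 0
    simp [he_def] at this
  have heC : e ∈ {v ∈ Bset d | v 0 = 1} := ⟨heB, rfl⟩
  refine ⟨e, heB, ?_⟩
  intro v hv
  -- find a nonzero coordinate
  have hvne : v ≠ 0 := hv.1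
  have hex : ∃ j : ZMod d, v j ≠ 0 := by
    by_contra hc
    push_neg at hc
    exact hvne (funext fun j => hc j)
  obtain ⟨j0, hj0⟩ := hex
  set m : ℕ := (-j0).val with hm_def
  set u : ZMod d → ℂ := (gT d ^ m) v with hu_def
  have hu0 : u 0 = v j0 := by
    rw [hu_def, gT_pow_apply]
    congr 1
    rw [hm_def, ZMod.natCast_rightInverse (-j0)]
    ring
  have huB : u ∈ Bset d := bset_gT_pow d hd m hv
  set c : ℂ := u 0 with hc_def
  have hc : c ≠ 0 := by rw [hc_def, ← hc_def, hu0]; exact hj0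
  set w : ZMod d → ℂ := c⁻¹ • u with hw_def
  have hwB : w ∈ Bset d := bset_smul d huB (inv_ne_zero hc)
  have hwC : w ∈ {v ∈ Bset d | v 0 = 1} := by
    refine ⟨hwB, ?_⟩
    rw [hw_def]
    simp only [Pi.smul_apply, smul_eq_mul]
    exact inv_mul_cancel₀ hc
  -- path from e to w within Bset
  have p1 : JoinedIn (Bset d) e w :=
    (h.joinedIn e heC w hwC).mono (fun x hx => hx.1)
  -- path from w to u within Bset (scaling path)
  have hCstar : IsPathConnected ({(0 : ℂ)}ᶜ : Set ℂ) :=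
    isPathConnected_compl_singleton_of_one_lt_rank
      (by rw [Complex.rank_real_complex]; norm_num) 0
  have q : JoinedIn ({(0 : ℂ)}ᶜ : Set ℂ) 1 c :=
    hCstar.joinedIn 1 (by simp) c (by simpa using hc)
  have hFcont : Continuous fun z : ℂ => z • w := continuous_id.smul continuous_const
  have q2 : JoinedIn ((fun z : ℂ => z • w) '' {(0 : ℂ)}ᶜ) ((1 : ℂ) • w) (c • w) :=
    q.map hFcont
  have himg : ((fun z : ℂ => z • w) '' {(0 : ℂ)}ᶜ) ⊆ Bset d := by
    rintro _ ⟨z, hz, rfl⟩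
    exact bset_smul d hwB (by simpa using hz)
  have hcw : c • w = u := by
    rw [hw_def, smul_smul, mul_inv_cancel₀ hc, one_smul]
  have p2 : JoinedIn (Bset d) w u := by
    have := (q2.mono himg)
    rwa [one_smul, hcw] at this
  have p3 : JoinedIn (Bset d) e u := p1.trans p2
  -- map back by gT ^ (d - m)
  have hmlt : m < d := ZMod.val_lt _
  set m' : ℕ := d - m with hm'_def
  have hm'm : m' + m = d := Nat.sub_add_cancel (le_of_lt hmlt)
  have hScont : Continuous fun x : ZMod d → ℂ => (gT d ^ m') x := by
    exact LinearMap.continuous_of_finiteDimensional (gT d ^ m').toLinearMap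
  have p4 : JoinedIn ((fun x : ZMod d → ℂ => (gT d ^ m') x) '' Bset d)
      ((gT d ^ m') e) ((gT d ^ m') u) := p3.map hScont
  have himg2 : ((fun x : ZMod d → ℂ => (gT d ^ m') x) '' Bset d) ⊆ Bset d := by
    rintro _ ⟨x, hx, rfl⟩
    exact bset_gT_pow d hd m' hx
  have hSe : (gT d ^ m') e = e := by
    funext j
    rw [gT_pow_apply]
  have hSu : (gT d ^ m') u = v := by
    funext j
    rw [hu_def, gT_pow_apply, gT_pow_apply, sub_sub, ← Nat.cast_add, hm'm,
      ZMod.natCast_self, sub_zero]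
  have := (p4.mono himg2)
  rwa [hSe, hSu] at this
end

section
/- Let p ≥ 5 be prime and define the Alltop sequence f ∈ ℂ^p by f(t) = p^{-1/2} · exp(2πi t³ / p) for t ∈ ZMod p. Then ⟨f, M^ℓ f⟩ = 0 for every ℓ ∈ {1,…,p-1}, and |⟨f, M^ℓ T^k f⟩|² = 1/p for every k ∈ {1,…,p-1} and every ℓ ∈ {0,…,p-1}. -/
open scoped ComplexConjugate

/-! ### Auxiliary lemmas -/

lemma gT_pow (d k : ℕ) (v : ZMod d → ℂ) (j : ZMod d) : (gT d ^ k) v j = v (j - k) := by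
  induction k generalizing v with
  | zero => simp
  | succ n ih =>
    rw [pow_succ]
    show (gT d ^ n) ((gT d) v) j = _
    rw [ih]
    show v (j - n - 1) = _
    push_cast
    ring_nf

lemma gM_pow (d l : ℕ) (v : ZMod d → ℂ) (j : ZMod d) :
    (gM d ^ l) v j = Complex.exp (2 * Real.pi * Complex.I / d) ^ (j.val * l) * v j := by
  induction l generalizing v with
  | zero => simp
  | succ n ih =>
    rw [pow_succ]
    show (gM d ^ n) ((gM d) v) j = _
    rw [ih]
    show _ * (Complex.exp (2 * Real.pi * Complex.I / d) ^ j.val • v j) = _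
    rw [smul_eq_mul, ← mul_assoc, ← pow_add]
    ring_nf

noncomputable def psi (p : ℕ) [NeZero p] (x : ZMod p) : ℂ :=
  Complex.exp (2 * Real.pi * Complex.I * x.val / p)

section Psi
variable (p : ℕ) [NeZero p]

lemma psi_natCast (n : ℕ) : psi p (n : ZMod p) = Complex.exp (2 * Real.pi * Complex.I * n / p) := by
  have hp : (p : ℂ) ≠ 0 := Nat.cast_ne_zero.mpr (NeZero.ne p)
  unfold psi
  rw [ZMod.val_natCast]
  conv_rhs => rw [show (n : ℕ) = p * (n / p) + n % p from (Nat.div_add_mod n p).symm]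
  push_cast
  rw [mul_add, add_div, Complex.exp_add]
  have : 2 * (Real.pi:ℂ) * Complex.I * (p * (n / p : ℕ)) / p = (n / p : ℕ) * (2 * Real.pi * Complex.I) := by
    field_simp
  rw [this, Complex.exp_nat_mul, Complex.exp_two_pi_mul_I, one_pow, one_mul]

lemma psi_zero : psi p 0 = 1 := by
  unfold psi; simp

lemma psi_add (x y : ZMod p) : psi p (x + y) = psi p x * psi p y := by
  have : (x + y : ZMod p) = ((x.val + y.val : ℕ) : ZMod p) := by
    push_cast [ZMod.natCast_val, ZMod.cast_id]; ring
  rw [this, psi_natCast]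
  unfold psi
  push_cast
  rw [← Complex.exp_add]
  ring_nf

lemma psi_ne_zero (x : ZMod p) : psi p x ≠ 0 := Complex.exp_ne_zero _

lemma psi_neg (x : ZMod p) : psi p (-x) = (psi p x)⁻¹ := by
  have h := psi_add p x (-x)
  rw [add_neg_cancel, psi_zero] at h
  field_simp [psi_ne_zero]
  linear_combination -h

lemma conj_psi (x : ZMod p) : (starRingEnd ℂ) (psi p x) = psi p (-x) := by
  rw [psi_neg]
  unfold psi
  rw [← Complex.exp_conj, ← Complex.exp_neg]
  congr 1
  simp only [map_div₀, map_mul, Complex.conj_ofReal, Complex.conj_I, Complex.conj_natCast,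
    map_ofNat]
  ring

lemma psi_eq_one_iff (x : ZMod p) : psi p x = 1 ↔ x = 0 := by
  constructor
  · intro h
    unfold psi at h
    rw [Complex.exp_eq_one_iff] at h
    obtain ⟨n, hn⟩ := h
    have hp : (p : ℂ) ≠ 0 := Nat.cast_ne_zero.mpr (NeZero.ne p)
    have h2 : (2 * (Real.pi:ℂ) * Complex.I) * (x.val : ℂ) =
        (2 * (Real.pi:ℂ) * Complex.I) * ((n : ℂ) * p) := by
      rw [div_eq_iff hp] at hn
      linear_combination hn
    have hne : (2 * (Real.pi:ℂ) * Complex.I) ≠ 0 := by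
      simp [Real.pi_ne_zero, Complex.I_ne_zero, Complex.ofReal_ne_zero]
    have h3 : (x.val : ℂ) = (n : ℂ) * p := mul_left_cancel₀ hne h2
    have h4 : (x.val : ℤ) = n * p := by exact_mod_cast h3
    have h5 : (p : ℕ) ∣ x.val := by
      have : (p : ℤ) ∣ (x.val : ℤ) := Dvd.intro n (by linarith)
      exact_mod_cast this
    have h6 : x.val = 0 := Nat.eq_zero_of_dvd_of_lt h5 (ZMod.val_lt x)
    exact (ZMod.val_eq_zero x).mp h6
  · intro h; rw [h, psi_zero]

lemma sum_psi (c : ZMod p) (hc : c ≠ 0) : ∑ j : ZMod p, psi p (c * j) = 0 := by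
  have h1 : psi p c * ∑ j : ZMod p, psi p (c * j) = ∑ j : ZMod p, psi p (c * j) := by
    rw [Finset.mul_sum]
    rw [← Equiv.sum_comp (Equiv.addRight (1 : ZMod p)) (fun j => psi p (c * j))]
    apply Finset.sum_congr rfl
    intro j _
    rw [← psi_add]
    congr 1
    show c + c * j = c * (j + 1)
    ring
  have h2 : (psi p c - 1) * ∑ j : ZMod p, psi p (c * j) = 0 := by
    rw [sub_mul, one_mul, h1, sub_self]
  rcases mul_eq_zero.mp h2 with h | h
  · exact absurd ((psi_eq_one_iff p c).mp (sub_eq_zero.mp h)) hc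
  · exact h

end Psi

lemma inn_eq (p : ℕ) [NeZero p] (f : ZMod p → ℂ)
    (hf : ∀ t : ZMod p, f t = ((Real.sqrt p : ℂ))⁻¹ *
      Complex.exp (2 * Real.pi * Complex.I * (t.val : ℂ) ^ 3 / p)) (k ℓ : ℕ) :
    inn f ((gM p ^ ℓ) ((gT p ^ k) f)) =
      (p : ℂ)⁻¹ * ∑ j : ZMod p,
        psi p ((ℓ : ZMod p) * j + (j - (k : ZMod p)) ^ 3 - j ^ 3) := by
  set s : ℂ := ((Real.sqrt p : ℂ))⁻¹ with hs
  have hf' : ∀ t : ZMod p, f t = s * psi p (t ^ 3) := by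
    intro t
    rw [hf t]
    congr 1
    have : (t ^ 3 : ZMod p) = ((t.val ^ 3 : ℕ) : ZMod p) := by
      push_cast [ZMod.natCast_val, ZMod.cast_id]
      rfl
    rw [this, psi_natCast]
    push_cast
    ring_nf
  have hconj_s : conj s = s := by
    rw [hs, map_inv₀, Complex.conj_ofReal]
  have hss : s * s = (p : ℂ)⁻¹ := by
    rw [hs, ← mul_inv]
    congr 1
    rw [← Complex.ofReal_mul, Real.mul_self_sqrt (Nat.cast_nonneg p)]
    push_cast; ring
  unfold inn
  rw [Finset.mul_sum]
  apply Finset.sum_congr rfl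
  intro j _
  rw [gM_pow, gT_pow, hf' (j - (k : ZMod p))]
  have e1 : conj (f j) = s * psi p (-(j ^ 3)) := by
    rw [hf' j, map_mul, hconj_s, conj_psi]
  have hω : Complex.exp (2 * Real.pi * Complex.I / p) ^ (j.val * ℓ) =
      psi p (j * (ℓ : ZMod p)) := by
    have : (j * (ℓ : ZMod p)) = ((j.val * ℓ : ℕ) : ZMod p) := by
      push_cast [ZMod.natCast_val, ZMod.cast_id]
      rfl
    rw [this, psi_natCast, ← Complex.exp_nat_mul]
    congr 1
    push_cast
    ring
  rw [e1, hω]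
  have e2 : psi p (-(j ^ 3)) * psi p (j * (ℓ : ZMod p)) * psi p ((j - (k : ZMod p)) ^ 3) =
      psi p ((ℓ : ZMod p) * j + (j - (k : ZMod p)) ^ 3 - j ^ 3) := by
    rw [← psi_add, ← psi_add]
    congr 1
    ring
  rw [← e2, ← hss]
  ring


/-- the Alltop sequence `f t = p^{-1/2} exp(2 π i t³ / p)` (for prime `p ≥ 5`)
satisfies `⟨f, M^ℓ f⟩ = 0` for `ℓ ∈ {1,…,p-1}` and `|⟨f, M^ℓ T^k f⟩|² = 1/p` for
`k ∈ {1,…,p-1}`, `ℓ ∈ {0,…,p-1}`. -/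
theorem alltop_sequence (p : ℕ) [Fact p.Prime] [NeZero p] (hp : 5 ≤ p)
    (f : ZMod p → ℂ)
    (hf : ∀ t : ZMod p, f t = ((Real.sqrt p : ℂ))⁻¹ *
      Complex.exp (2 * Real.pi * Complex.I * (t.val : ℂ) ^ 3 / p)) :
    (∀ ℓ : ℕ, 1 ≤ ℓ → ℓ ≤ p - 1 → inn f ((gM p ^ ℓ) f) = 0) ∧
    (∀ k ℓ : ℕ, 1 ≤ k → k ≤ p - 1 → ℓ ≤ p - 1 →
      ‖inn f ((gM p ^ ℓ) ((gT p ^ k) f))‖ ^ 2 = 1 / p) := by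
  have hp2 : (p : ℂ) ≠ 0 := Nat.cast_ne_zero.mpr (NeZero.ne p)
  have h6 : (6 : ZMod p) ≠ 0 := by
    have : ((6 : ℕ) : ZMod p) ≠ 0 := by
      rw [Ne, ZMod.natCast_eq_zero_iff]
      intro hd
      have := Nat.le_of_dvd (by norm_num) hd
      interval_cases p
      · exact absurd hd (by decide)
      · exact (by decide : ¬ Nat.Prime 6) Fact.out
    exact_mod_cast this
  constructor
  · intro ℓ h1 h2
    have hL : ((ℓ : ZMod p)) ≠ 0 := by
      rw [Ne, ZMod.natCast_eq_zero_iff]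
      intro hd
      have := Nat.le_of_dvd (by omega) hd
      omega
    have h0 : (gT p ^ 0) f = f := by rw [pow_zero]; rfl
    have heq := inn_eq p f hf 0 ℓ
    rw [h0] at heq
    rw [heq]
    have : ∑ j : ZMod p, psi p ((ℓ : ZMod p) * j + (j - ((0 : ℕ) : ZMod p)) ^ 3 - j ^ 3) =
        ∑ j : ZMod p, psi p ((ℓ : ZMod p) * j) := by
      apply Finset.sum_congr rfl
      intro j _
      congr 1
      push_cast
      ring
    rw [this, sum_psi p _ hL, mul_zero]
  · intro k ℓ hk1 hk2 hℓ
    have hK : ((k : ZMod p)) ≠ 0 := by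
      rw [Ne, ZMod.natCast_eq_zero_iff]
      intro hd
      have := Nat.le_of_dvd (by omega) hd
      omega
    set L : ZMod p := (ℓ : ZMod p) with hLdef
    set K : ZMod p := (k : ZMod p) with hKdef
    set G : ZMod p → ZMod p := fun j => L * j + (j - K) ^ 3 - j ^ 3 with hG
    set S : ℂ := ∑ j : ZMod p, psi p (G j) with hSdef
    have key : S * conj S = (p : ℂ) := by
      have hcS : conj S = ∑ i : ZMod p, psi p (-(G i)) := by
        rw [hSdef, map_sum]
        exact Finset.sum_congr rfl fun i _ => conj_psi p (G i)
      rw [hcS, hSdef, Finset.sum_mul_sum]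
      have step1 : ∀ j i : ZMod p, psi p (G j) * psi p (-(G i)) = psi p (G j - G i) := by
        intro j i
        rw [← psi_add]
        congr 1
        ring
      calc (∑ j : ZMod p, ∑ i : ZMod p, psi p (G j) * psi p (-(G i)))
          = ∑ i : ZMod p, ∑ j : ZMod p, psi p (G j - G i) := by
            rw [Finset.sum_comm]
            exact Finset.sum_congr rfl fun i _ => Finset.sum_congr rfl fun j _ => step1 j i
        _ = ∑ i : ZMod p, ∑ h : ZMod p, psi p (G (h + i) - G i) := by
            apply Finset.sum_congr rfl
            intro i _
            exact (Equiv.sum_comp (Equiv.addRight i) (fun j => psi p (G j - G i))).symm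
        _ = ∑ h : ZMod p, ∑ i : ZMod p, psi p (G (h + i) - G i) := Finset.sum_comm
        _ = (p : ℂ) := by
            rw [Finset.sum_eq_single_of_mem (0 : ZMod p) (Finset.mem_univ _)]
            · have : ∀ i : ZMod p, G ((0 : ZMod p) + i) - G i = 0 := by
                intro i; rw [zero_add, sub_self]
              simp only [this, psi_zero]
              rw [Finset.sum_const, Finset.card_univ, ZMod.card]
              simp
            · intro h _ hh
              have hexp : ∀ i : ZMod p, G (h + i) - G i =
                  ((L - 3 * K * h + 3 * K ^ 2) * h) + (-(6 * K * h)) * i := by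
                intro i
                rw [hG]
                ring
              have hc : (-(6 * K * h)) ≠ 0 := by
                rw [neg_ne_zero]
                exact mul_ne_zero (mul_ne_zero h6 hK) hh
              calc (∑ i : ZMod p, psi p (G (h + i) - G i))
                  = ∑ i : ZMod p, psi p ((L - 3 * K * h + 3 * K ^ 2) * h) *
                      psi p ((-(6 * K * h)) * i) := by
                    apply Finset.sum_congr rfl
                    intro i _
                    rw [hexp i, psi_add]
                _ = 0 := by
                    rw [← Finset.mul_sum, sum_psi p _ hc, mul_zero]
    have hinn : inn f ((gM p ^ ℓ) ((gT p ^ k) f)) = (p : ℂ)⁻¹ * S := inn_eq p f hf k ℓ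
    have habs : (Complex.normSq (inn f ((gM p ^ ℓ) ((gT p ^ k) f))) : ℂ) = ((1 / p : ℝ) : ℂ) := by
      rw [← Complex.mul_conj, hinn, map_mul, map_inv₀, Complex.conj_natCast]
      push_cast
      rw [mul_mul_mul_comm, key]
      field_simp
    rw [Complex.sq_norm]
    exact_mod_cast habs
end

section
/- Let p ≥ 5 be prime and define v ∈ ℂ^p by v(j) = p^{-1} · ∑_{t=0}^{p-1} exp(2πi(t³ + jt)/p) for j ∈ ZMod p (i.e., v is the unitary discrete Fourier transform of the Alltop sequence f(t) = p^{-1/2} exp(2πi t³/p)). Then ‖v‖₂ = 1 and G(v) is (0, 1/p)-biangular: |⟨v, T^k v⟩|² = 0 for every k ∈ {1,…,p-1}, and |⟨v, M^ℓ T^k v⟩|² = 1/p for every k ∈ {0,…,p-1} and ℓ ∈ {1,…,p-1}. That is, v generates a Gabor MUB in ℂ^p. -/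
open scoped ComplexConjugate

namespace AlltopAux

open Complex Finset

/-- The standard additive character of `ZMod p`. -/
noncomputable def psi (p : ℕ) [NeZero p] (x : ZMod p) : ℂ :=
  Complex.exp (2 * Real.pi * Complex.I * x.val / p)

lemma psi_natCast (p : ℕ) [NeZero p] (n : ℕ) :
    psi p (n : ZMod p) = Complex.exp (2 * Real.pi * Complex.I * n / p) := by
  have hp : (p : ℂ) ≠ 0 := Nat.cast_ne_zero.mpr (NeZero.ne p)
  unfold psi
  rw [ZMod.val_natCast]
  have hn : (n : ℂ) = (n % p : ℕ) + (p : ℕ) * (n / p : ℕ) := by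
    have h := Nat.mod_add_div n p
    exact_mod_cast (congrArg (fun m : ℕ => (m : ℂ)) h).symm
  rw [show 2 * (Real.pi:ℂ) * Complex.I * (n:ℂ) / p
      = 2 * (Real.pi:ℂ) * Complex.I * ((n % p : ℕ):ℂ) / p
        + ((n / p : ℕ):ℂ) * (2 * Real.pi * Complex.I) by
    rw [div_add' _ _ _ hp, div_left_inj' hp]
    linear_combination (2 * (Real.pi:ℂ) * Complex.I) * hn]
  rw [Complex.exp_add, Complex.exp_nat_mul_two_pi_mul_I, mul_one]

lemma psi_zero (p : ℕ) [NeZero p] : psi p 0 = 1 := by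
  simpa using psi_natCast p 0

lemma psi_add (p : ℕ) [NeZero p] (x y : ZMod p) : psi p (x + y) = psi p x * psi p y := by
  have hx : x = ((x.val : ℕ) : ZMod p) := (ZMod.natCast_zmod_val x).symm
  have hy : y = ((y.val : ℕ) : ZMod p) := (ZMod.natCast_zmod_val y).symm
  rw [hx, hy, ← Nat.cast_add, psi_natCast, psi_natCast, psi_natCast, ← Complex.exp_add]
  congr 1
  push_cast
  ring

lemma psi_neg (p : ℕ) [NeZero p] (x : ZMod p) : psi p (-x) = (psi p x)⁻¹ := by
  have h : psi p x * psi p (-x) = 1 := by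
    rw [← psi_add, add_neg_cancel, psi_zero]
  exact eq_inv_of_mul_eq_one_right h

lemma conj_psi (p : ℕ) [NeZero p] (x : ZMod p) : conj (psi p x) = psi p (-x) := by
  rw [psi_neg]
  unfold psi
  rw [← Complex.exp_conj, ← Complex.exp_neg]
  congr 1
  simp only [map_div₀, map_mul, Complex.conj_I, Complex.conj_ofReal, map_ofNat, map_natCast]
  ring

lemma psi_ne_one (p : ℕ) [NeZero p] {x : ZMod p} (hx : x ≠ 0) : psi p x ≠ 1 := by
  intro h
  unfold psi at h
  rw [Complex.exp_eq_one_iff] at h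
  obtain ⟨n, hn⟩ := h
  have hp : (p : ℂ) ≠ 0 := Nat.cast_ne_zero.mpr (NeZero.ne p)
  have hI : (2 * (Real.pi:ℂ) * Complex.I) ≠ 0 := by
    simp [Real.pi_ne_zero, Complex.I_ne_zero]
  have h2 := congrArg (· * (p:ℂ)) hn
  simp only [div_mul_cancel₀ _ hp] at h2
  have h3 : (x.val : ℂ) = n * p := by
    have := mul_left_cancel₀ hI
      (show 2 * (Real.pi:ℂ) * Complex.I * (x.val:ℂ)
          = 2 * (Real.pi:ℂ) * Complex.I * ((n:ℂ) * p) by linear_combination h2)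
    exact this
  have hval : (x.val : ℤ) = n * p := by exact_mod_cast h3
  have hdvd : p ∣ x.val := by
    have : (p:ℤ) ∣ (x.val:ℤ) := ⟨n, by linarith⟩
    exact_mod_cast this
  have h0 : x.val = 0 := Nat.eq_zero_of_dvd_of_lt hdvd (ZMod.val_lt x)
  exact hx ((ZMod.val_eq_zero x).mp h0)

lemma sum_psi_mul (p : ℕ) [NeZero p] (c : ZMod p) :
    ∑ x : ZMod p, psi p (x * c) = if c = 0 then (p:ℂ) else 0 := by
  split_ifs with hc
  · subst hc; simp [psi_zero]
  · have hshift : ∑ x : ZMod p, psi p (x * c) = ∑ x : ZMod p, psi p ((x + 1) * c) :=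
      (Fintype.sum_equiv (Equiv.addRight (1 : ZMod p)) _ _ (fun x => rfl)).symm
    have hmul : ∑ x : ZMod p, psi p ((x + 1) * c) = psi p c * ∑ x : ZMod p, psi p (x * c) := by
      rw [Finset.mul_sum]
      refine Finset.sum_congr rfl fun x _ => ?_
      rw [add_mul, one_mul, psi_add]
      ring
    have heq : ∑ x : ZMod p, psi p (x * c) = psi p c * ∑ x : ZMod p, psi p (x * c) :=
      hshift.trans hmul
    have hz : (psi p c - 1) * ∑ x : ZMod p, psi p (x * c) = 0 := by linear_combination -heq
    rcases mul_eq_zero.mp hz with h | h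
    · exact (psi_ne_one p hc (sub_eq_zero.mp h)).elim
    · exact h

lemma gT_apply (d : ℕ) (w : ZMod d → ℂ) (j : ZMod d) : (gT d) w j = w (j - 1) := rfl

lemma gT_pow_apply (d : ℕ) (k : ℕ) (w : ZMod d → ℂ) (j : ZMod d) :
    ((gT d ^ k) w) j = w (j - k) := by
  induction k generalizing w j with
  | zero => simp
  | succ n ih =>
    rw [pow_succ]
    have h : ((gT d ^ n * gT d) w) j = ((gT d ^ n) ((gT d) w)) j := rfl
    rw [h, ih, gT_apply]
    congr 1
    push_cast
    ring

lemma gM_apply (d : ℕ) (w : ZMod d → ℂ) (j : ZMod d) :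
    (gM d) w j = Complex.exp (2 * Real.pi * Complex.I / d) ^ j.val * w j := rfl

lemma gM_pow_apply (d : ℕ) (ℓ : ℕ) (w : ZMod d → ℂ) (j : ZMod d) :
    ((gM d ^ ℓ) w) j = (Complex.exp (2 * Real.pi * Complex.I / d) ^ j.val) ^ ℓ * w j := by
  induction ℓ generalizing w with
  | zero => simp
  | succ n ih =>
    rw [pow_succ]
    have h : ((gM d ^ n * gM d) w) j = ((gM d ^ n) ((gM d) w)) j := rfl
    rw [h, ih, gM_apply]
    ring

lemma omega_pow (p : ℕ) [NeZero p] (n : ℕ) :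
    Complex.exp (2 * Real.pi * Complex.I / p) ^ n = psi p (n : ZMod p) := by
  rw [psi_natCast, ← Complex.exp_nat_mul]
  congr 1
  ring

lemma gM_pow_apply' (p : ℕ) [NeZero p] (ℓ : ℕ) (w : ZMod p → ℂ) (j : ZMod p) :
    ((gM p ^ ℓ) w) j = psi p (j * ℓ) * w j := by
  rw [gM_pow_apply, ← pow_mul, omega_pow]
  congr 2
  push_cast
  rw [ZMod.natCast_zmod_val]

lemma sum_conv (p : ℕ) [NeZero p] (j : ZMod p) :
    ∑ t ∈ Finset.range p,
        Complex.exp (2 * Real.pi * Complex.I * ((t : ℂ) ^ 3 + (j.val : ℂ) * t) / p)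
      = ∑ x : ZMod p, psi p (x ^ 3 + j * x) := by
  refine Finset.sum_bij (fun t _ => (t : ZMod p)) (fun t _ => Finset.mem_univ _) ?_ ?_ ?_
  · intro a ha b hb hab
    have h := congrArg ZMod.val hab
    rwa [ZMod.val_cast_of_lt (Finset.mem_range.mp ha),
      ZMod.val_cast_of_lt (Finset.mem_range.mp hb)] at h
  · intro b _
    exact ⟨b.val, Finset.mem_range.mpr (ZMod.val_lt b), ZMod.natCast_zmod_val b⟩
  · intro t _
    have h : ((t : ZMod p)) ^ 3 + j * (t : ZMod p) = ((t ^ 3 + j.val * t : ℕ) : ZMod p) := by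
      push_cast
      rw [ZMod.natCast_zmod_val]
    rw [h, psi_natCast]
    congr 1
    push_cast
    ring

lemma key (p : ℕ) [NeZero p] (v : ZMod p → ℂ)
    (hv' : ∀ j : ZMod p, v j = (p:ℂ)⁻¹ * ∑ t : ZMod p, psi p (t^3 + j*t))
    (k ℓ : ℕ) :
    inn v ((gM p ^ ℓ) ((gT p ^ k) v)) =
      (p:ℂ)⁻¹ * ∑ t : ZMod p,
        psi p (t^3 - ((ℓ:ZMod p)+t)^3 - (k:ZMod p)*t) := by
  have hp : (p : ℂ) ≠ 0 := Nat.cast_ne_zero.mpr (NeZero.ne p)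
  set K : ZMod p := (k : ZMod p) with hK
  set L : ZMod p := (ℓ : ZMod p) with hL
  have hconj : ∀ j : ZMod p,
      conj (v j) = (p:ℂ)⁻¹ * ∑ s : ZMod p, psi p (-(s^3 + j*s)) := by
    intro j
    rw [hv' j, map_mul, map_sum]
    congr 1
    · simp
    · exact Finset.sum_congr rfl fun s _ => conj_psi p _
  have hexp : ∀ (c : ℂ) (F G : ZMod p → ℂ),
      ((p:ℂ)⁻¹ * ∑ s, F s) * (c * ((p:ℂ)⁻¹ * ∑ t, G t))
        = ∑ s, ∑ t, (p:ℂ)⁻¹ * (p:ℂ)⁻¹ * (F s * c * G t) := by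
    intro c F G
    calc ((p:ℂ)⁻¹ * ∑ s, F s) * (c * ((p:ℂ)⁻¹ * ∑ t, G t))
        = ((∑ s, F s) * (∑ t, G t)) * ((p:ℂ)⁻¹ * (p:ℂ)⁻¹ * c) := by ring
      _ = (∑ s, ∑ t, F s * G t) * ((p:ℂ)⁻¹ * (p:ℂ)⁻¹ * c) := by rw [Finset.sum_mul_sum]
      _ = ∑ s, ∑ t, (p:ℂ)⁻¹ * (p:ℂ)⁻¹ * (F s * c * G t) := by
          rw [Finset.sum_mul]
          refine Finset.sum_congr rfl fun s _ => ?_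
          rw [Finset.sum_mul]
          exact Finset.sum_congr rfl fun t _ => by ring
  calc inn v ((gM p ^ ℓ) ((gT p ^ k) v))
      = ∑ j : ZMod p, conj (v j) * (psi p (j * L) * v (j - K)) := by
        unfold inn
        exact Finset.sum_congr rfl fun j _ => by
          rw [gM_pow_apply', gT_pow_apply]
    _ = ∑ j : ZMod p, ∑ s : ZMod p, ∑ t : ZMod p,
          (p:ℂ)⁻¹ * (p:ℂ)⁻¹ * (psi p (t^3 - s^3 - K*t) * psi p (j * (L + t - s))) := by
        refine Finset.sum_congr rfl fun j _ => ?_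
        rw [hconj j, hv' (j - K), hexp]
        refine Finset.sum_congr rfl fun s _ => Finset.sum_congr rfl fun t _ => ?_
        congr 1
        rw [← psi_add, ← psi_add, ← psi_add]
        congr 1
        ring
    _ = ∑ s : ZMod p, ∑ t : ZMod p,
          (p:ℂ)⁻¹ * (p:ℂ)⁻¹ * psi p (t^3 - s^3 - K*t) *
            ∑ j : ZMod p, psi p (j * (L + t - s)) := by
        rw [Finset.sum_comm]
        refine Finset.sum_congr rfl fun s _ => ?_
        rw [Finset.sum_comm]
        refine Finset.sum_congr rfl fun t _ => ?_
        rw [Finset.mul_sum]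
        exact Finset.sum_congr rfl fun j _ => by ring
    _ = ∑ t : ZMod p, ∑ s : ZMod p,
          (if L + t = s then (p:ℂ)⁻¹ * (p:ℂ)⁻¹ * psi p (t^3 - s^3 - K*t) * p else 0) := by
        rw [Finset.sum_comm]
        refine Finset.sum_congr rfl fun t _ => Finset.sum_congr rfl fun s _ => ?_
        rw [sum_psi_mul]
        by_cases h : L + t = s
        · rw [if_pos (sub_eq_zero.mpr h), if_pos h]
        · rw [if_neg (fun hh => h (sub_eq_zero.mp hh)), if_neg h, mul_zero]
    _ = ∑ t : ZMod p, (p:ℂ)⁻¹ * (p:ℂ)⁻¹ * psi p (t^3 - (L+t)^3 - K*t) * p := by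
        refine Finset.sum_congr rfl fun t _ => ?_
        exact Finset.sum_ite_eq Finset.univ (L + t)
          (fun s => (p:ℂ)⁻¹ * (p:ℂ)⁻¹ * psi p (t^3 - s^3 - K*t) * p) |>.trans (by simp)
    _ = (p:ℂ)⁻¹ * ∑ t : ZMod p, psi p (t^3 - (L+t)^3 - K*t) := by
        rw [Finset.mul_sum]
        refine Finset.sum_congr rfl fun t _ => ?_
        field_simp

/-- The squared magnitude of the Gauss-type sum for `L ≠ 0`. -/
lemma gauss_normSq (p : ℕ) [Fact p.Prime] [NeZero p] (h6 : (6 : ZMod p) ≠ 0) (L K : ZMod p) (hL : L ≠ 0) :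
    (∑ t : ZMod p, psi p (t^3 - (L+t)^3 - K*t)) *
      conj (∑ t : ZMod p, psi p (t^3 - (L+t)^3 - K*t)) = (p : ℂ) := by
  have h6L : 6 * L ≠ 0 := mul_ne_zero h6 hL
  set f : ZMod p → ZMod p := fun t => t^3 - (L+t)^3 - K*t with hf
  have hc : conj (∑ t : ZMod p, psi p (f t)) = ∑ s : ZMod p, psi p (-(f s)) := by
    rw [map_sum]
    exact Finset.sum_congr rfl fun s _ => conj_psi p _
  rw [hc, Finset.sum_mul_sum]
  calc ∑ t : ZMod p, ∑ s : ZMod p, psi p (f t) * psi p (-(f s))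
      = ∑ s : ZMod p, ∑ t : ZMod p, psi p (f t) * psi p (-(f s)) := Finset.sum_comm
    _ = ∑ s : ZMod p, ∑ u : ZMod p,
          psi p (s * (-(6*L*u))) * psi p (-(3*L^2*u) - 3*L*u^2 - K*u) := by
        refine Finset.sum_congr rfl fun s _ => ?_
        refine (Fintype.sum_equiv (Equiv.addLeft s)
          (fun u => psi p (s * (-(6*L*u))) * psi p (-(3*L^2*u) - 3*L*u^2 - K*u))
          (fun t => psi p (f t) * psi p (-(f s))) (fun u => ?_)).symm
        show psi p (s * (-(6*L*u))) * psi p (-(3*L^2*u) - 3*L*u^2 - K*u)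
            = psi p (f (s + u)) * psi p (-(f s))
        rw [← psi_add, ← psi_add]
        congr 1
        simp only [hf]
        ring
    _ = ∑ u : ZMod p, psi p (-(3*L^2*u) - 3*L*u^2 - K*u) *
          ∑ s : ZMod p, psi p (s * (-(6*L*u))) := by
        rw [Finset.sum_comm]
        refine Finset.sum_congr rfl fun u _ => ?_
        rw [Finset.mul_sum]
        exact Finset.sum_congr rfl fun s _ => by ring
    _ = ∑ u : ZMod p, (if 0 = u then (psi p (-(3*L^2*u) - 3*L*u^2 - K*u) * p) else 0) := by
        refine Finset.sum_congr rfl fun u _ => ?_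
        rw [sum_psi_mul]
        by_cases h : (0 : ZMod p) = u
        · subst h
          rw [if_pos (by ring), if_pos rfl]
        · rw [if_neg, if_neg h, mul_zero]
          intro hz
          rw [neg_eq_zero] at hz
          rcases mul_eq_zero.mp hz with h' | h'
          · exact h6L h'
          · exact h h'.symm
    _ = (p : ℂ) := by
        rw [Finset.sum_ite_eq Finset.univ (0 : ZMod p)
          (fun u => psi p (-(3*L^2*u) - 3*L*u^2 - K*u) * p)]
        simp [psi_zero]

end AlltopAux

/-- the unitary DFT of the Alltop sequence,
`v j = p⁻¹ ∑_{t<p} exp(2 π i (t³ + j t) / p)`, is unit-norm and generates a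
`(0, 1/p)`-biangular Gabor system (a Gabor MUB) for prime `p ≥ 5`. -/
theorem alltop_fourier_mub (p : ℕ) [Fact p.Prime] [NeZero p] (hp : 5 ≤ p)
    (v : ZMod p → ℂ)
    (hv : ∀ j : ZMod p, v j = (p : ℂ)⁻¹ *
      ∑ t ∈ Finset.range p,
        Complex.exp (2 * Real.pi * Complex.I * ((t : ℂ) ^ 3 + (j.val : ℂ) * t) / p)) :
    (∑ j, ‖v j‖ ^ 2 = 1) ∧ Biangular p v 0 (1 / p) := by
  have hp0 : (p : ℂ) ≠ 0 := Nat.cast_ne_zero.mpr (NeZero.ne p)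
  have hprime : p.Prime := Fact.out
  have hv' : ∀ j : ZMod p, v j = (p:ℂ)⁻¹ * ∑ t : ZMod p, AlltopAux.psi p (t^3 + j*t) := by
    intro j
    rw [hv j, AlltopAux.sum_conv]
  have h6 : (6 : ZMod p) ≠ 0 := by
    have hnd : ¬ p ∣ 6 := by
      intro hd
      have hle := Nat.le_of_dvd (by norm_num) hd
      interval_cases p
      · norm_num at hd
      · norm_num at hprime
    intro h0
    exact hnd (by exact_mod_cast (ZMod.natCast_eq_zero_iff 6 p).mp (by exact_mod_cast h0))
  have hcast_ne : ∀ m : ℕ, 1 ≤ m → m ≤ p - 1 → (m : ZMod p) ≠ 0 := by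
    intro m hm1 hm2 h0
    have hdvd : p ∣ m := (ZMod.natCast_eq_zero_iff m p).mp h0
    have := Nat.le_of_dvd (by omega) hdvd
    omega
  -- norm one
  have hnorm : ∑ j, ‖v j‖ ^ 2 = 1 := by
    have h00 := AlltopAux.key p v hv' 0 0
    have hid : (gM p ^ 0) ((gT p ^ 0) v) = v := by rw [pow_zero, pow_zero]; rfl
    have h1 : inn v ((gM p ^ 0) ((gT p ^ 0) v)) = inn v v := by rw [hid]
    have hinn : inn v v = 1 := by
      rw [← h1, h00]
      have hsum : ∑ t : ZMod p,
          AlltopAux.psi p (t^3 - (((0:ℕ):ZMod p)+t)^3 - ((0:ℕ):ZMod p)*t) = (p : ℂ) := by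
        have : ∀ t : ZMod p,
            t^3 - (((0:ℕ):ZMod p)+t)^3 - ((0:ℕ):ZMod p)*t = 0 := by
          intro t; push_cast; ring
        simp only [this, AlltopAux.psi_zero]
        simp [Finset.card_univ]
      rw [hsum, inv_mul_cancel₀ hp0]
    have hcast : ((∑ j, ‖v j‖ ^ 2 : ℝ) : ℂ) = inn v v := by
      push_cast
      unfold inn
      refine Finset.sum_congr rfl fun j _ => ?_
      rw [show ((‖v j‖ : ℂ))^2 = ((‖v j‖^2 : ℝ) : ℂ) by push_cast; ring,
        Complex.sq_norm, Complex.normSq_eq_conj_mul_self]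
    have := hcast.trans hinn
    exact_mod_cast this
  refine ⟨hnorm, ?_, ?_⟩
  · -- translations: α = 0
    intro k hk1 hk2
    have hkey := AlltopAux.key p v hv' k 0
    have hid : (gM p ^ 0) ((gT p ^ k) v) = (gT p ^ k) v := by rw [pow_zero]; rfl
    have hK : (k : ZMod p) ≠ 0 := hcast_ne k hk1 hk2
    have hzero : inn v ((gT p ^ k) v) = 0 := by
      rw [← hid, hkey]
      have harg : ∀ t : ZMod p,
          t^3 - (((0:ℕ):ZMod p)+t)^3 - (k:ZMod p)*t = t * (-(k:ZMod p)) := by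
        intro t; push_cast; ring
      rw [show ∑ t : ZMod p,
            AlltopAux.psi p (t^3 - (((0:ℕ):ZMod p)+t)^3 - (k:ZMod p)*t)
          = ∑ t : ZMod p, AlltopAux.psi p (t * (-(k:ZMod p))) from
        Finset.sum_congr rfl fun t _ => by rw [harg t]]
      rw [AlltopAux.sum_psi_mul, if_neg (neg_ne_zero.mpr hK), mul_zero]
    rw [hzero]
    simp
  · -- modulations: β = 1/p
    intro k ℓ hk hℓ1 hℓ2
    have hkey := AlltopAux.key p v hv' k ℓ
    have hL : (ℓ : ZMod p) ≠ 0 := hcast_ne ℓ hℓ1 hℓ2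
    set z := inn v ((gM p ^ ℓ) ((gT p ^ k) v)) with hz
    have hg := AlltopAux.gauss_normSq p h6 (ℓ : ZMod p) (k : ZMod p) hL
    have hSS : z * conj z = (p:ℂ)⁻¹ := by
      rw [hkey, map_mul]
      rw [show conj ((p:ℂ)⁻¹) = (p:ℂ)⁻¹ by simp]
      calc (p:ℂ)⁻¹ * (∑ t : ZMod p, AlltopAux.psi p (t^3 - ((ℓ:ZMod p)+t)^3 - (k:ZMod p)*t)) *
            ((p:ℂ)⁻¹ * conj (∑ t : ZMod p, AlltopAux.psi p (t^3 - ((ℓ:ZMod p)+t)^3 - (k:ZMod p)*t)))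
          = (p:ℂ)⁻¹ * (p:ℂ)⁻¹ *
            ((∑ t : ZMod p, AlltopAux.psi p (t^3 - ((ℓ:ZMod p)+t)^3 - (k:ZMod p)*t)) *
              conj (∑ t : ZMod p, AlltopAux.psi p (t^3 - ((ℓ:ZMod p)+t)^3 - (k:ZMod p)*t))) := by
            ring
        _ = (p:ℂ)⁻¹ := by rw [hg]; field_simp
    have hre : ((‖z‖ ^ 2 : ℝ) : ℂ) = (((1:ℝ)/p : ℝ) : ℂ) := by
      calc ((‖z‖ ^ 2 : ℝ) : ℂ) = ((Complex.normSq z : ℝ) : ℂ) := by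
            rw [Complex.sq_norm]
        _ = z * conj z := (Complex.mul_conj z).symm
        _ = (p:ℂ)⁻¹ := hSS
        _ = (((1:ℝ)/p : ℝ) : ℂ) := by push_cast; ring
    exact_mod_cast hre
end

section
/- Let u ∈ ℂ² be the vector with coordinates u(0) = 1 and u(1) = (1+√2)i, and let v = u/‖u‖₂. Then G(v) is (0, 1/2)-biangular: ⟨v, T v⟩ = 0 and |⟨v, M^ℓ T^k v⟩|² = 1/2 for every k ∈ {0,1} and ℓ = 1. That is, v generates a Gabor MUB in ℂ². -/
open scoped ComplexConjugate

/-- with `u = (1, (1 + √2) i)` and `v = u / ‖u‖₂`, the Gabor system `G(v)`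
is `(0, 1/2)`-biangular: `⟨v, T v⟩ = 0` and `|⟨v, M T^k v⟩|² = 1/2` for `k ∈ {0, 1}`. -/
theorem gabor_mub_dim_two (u v : ZMod 2 → ℂ)
    (hu0 : u 0 = 1) (hu1 : u 1 = (1 + Real.sqrt 2) * Complex.I)
    (hv : ∀ j, v j = u j / (Real.sqrt (∑ i, ‖u i‖ ^ 2) : ℂ)) :
    inn v ((gT 2) v) = 0 ∧
    (∀ k : ℕ, k ≤ 1 → ‖inn v ((gM 2) ((gT 2 ^ k) v))‖ ^ 2 = 1 / 2) := by
  have hsumC : ∀ f : ZMod 2 → ℂ, ∑ j, f j = f 0 + f 1 := fun f => Fin.sum_univ_two f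
  have hsumR : ∀ f : ZMod 2 → ℝ, ∑ j, f j = f 0 + f 1 := fun f => Fin.sum_univ_two f
  set s := Real.sqrt 2 with hs
  have hs0 : 0 ≤ s := Real.sqrt_nonneg 2
  have hs2 : s ^ 2 = 2 := Real.sq_sqrt (by norm_num)
  have hsum : (∑ i : ZMod 2, ‖u i‖ ^ 2) = 4 + 2 * s := by
    rw [hsumR, hu0, hu1]
    rw [norm_mul, Complex.norm_I, norm_one,
      show ((1:ℂ) + (s:ℝ)) = ((1+s:ℝ):ℂ) by push_cast; ring, Complex.norm_real, Real.norm_eq_abs,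
      abs_of_nonneg (by linarith : (0:ℝ) ≤ 1 + s)]
    nlinarith
  set N := Real.sqrt (∑ i : ZMod 2, ‖u i‖ ^ 2) with hN
  have hNpos : 0 < N := by
    rw [hN, hsum]; exact Real.sqrt_pos.2 (by linarith)
  have hN2 : N ^ 2 = 4 + 2 * s := by
    rw [hN, hsum]; exact Real.sq_sqrt (by linarith)
  have hNne : (N : ℂ) ≠ 0 := by exact_mod_cast hNpos.ne'
  have hv0 : v 0 = 1 / (N : ℂ) := by rw [hv 0, hu0]
  have hv1 : v 1 = ((1 + s : ℝ) : ℂ) * Complex.I / (N : ℂ) := by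
    rw [hv 1, hu1]; push_cast; ring
  have hT : ∀ w : ZMod 2 → ℂ, ∀ j, (gT 2) w j = w (j - 1) := by
    intro w j; simp [gT, LinearEquiv.funCongrLeft]
  have hMc : Complex.exp (2 * Real.pi * Complex.I / 2) = -1 := by
    rw [show (2 * Real.pi * Complex.I / 2 : ℂ) = Real.pi * Complex.I by ring,
      Complex.exp_pi_mul_I]
  have hM : ∀ w : ZMod 2 → ℂ, ∀ j : ZMod 2, (gM 2) w j = (-1) ^ j.val * w j := by
    intro w j; simp [gM, hMc]
  have hT0 : (gT 2) v 0 = v 1 := by rw [hT]; rfl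
  have hT1 : (gT 2) v 1 = v 0 := by rw [hT]; rfl
  have hval0 : ((0 : ZMod 2)).val = 0 := rfl
  have hval1 : ((1 : ZMod 2)).val = 1 := rfl
  constructor
  · rw [inn, hsumC, hT0, hT1, hv0, hv1]
    rw [map_div₀, map_div₀, map_mul, Complex.conj_I, Complex.conj_ofReal,
      Complex.conj_ofReal, map_one]
    field_simp
    ring
  · intro k hk
    have hN2c : (N : ℂ) ^ 2 = 4 + 2 * (s : ℂ) := by exact_mod_cast hN2
    interval_cases k
    · have hg0 : (gT 2 ^ 0) v = v := rfl
      rw [hg0]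
      have : inn v ((gM 2) v)
          = (((1 - (1+s)^2) / (4 + 2*s) : ℝ) : ℂ) := by
        rw [inn, hsumC]
        rw [hM v 0, hM v 1, hv0, hv1]
        rw [map_div₀, map_div₀, map_mul, Complex.conj_I, Complex.conj_ofReal,
          Complex.conj_ofReal, map_one]
        have h42 : (4 + 2 * (s:ℂ)) ≠ 0 := by
          rw [← hN2c]; exact pow_ne_zero _ hNne
        simp only [hval0, hval1, pow_zero, pow_one, one_mul, neg_one_mul]
        field_simp
        rw [hN2c, show (4 + s * 2 : ℝ) = 4 + 2 * s by ring]
        push_cast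
        rw [mul_div_assoc', mul_div_cancel_left₀ _ h42]
        push_cast
        ring_nf
        rw [Complex.I_sq]
        ring
      rw [this, Complex.norm_real, Real.norm_eq_abs]
      rw [abs_div, abs_of_nonneg (by linarith : (0:ℝ) ≤ 4 + 2*s),
        abs_of_nonpos (by nlinarith : (1 - (1+s)^2 : ℝ) ≤ 0)]
      rw [div_pow]
      rw [div_eq_iff (by nlinarith : ((4+2*s)^2 : ℝ) ≠ 0)]
      nlinarith
    · have hg1 : (gT 2 ^ 1) v = (gT 2) v := by rw [pow_one]
      rw [hg1]
      have : inn v ((gM 2) ((gT 2) v))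
          = (((2*(1+s)) / (4 + 2*s) : ℝ) : ℂ) * Complex.I := by
        rw [inn, hsumC]
        rw [hM _ 0, hM _ 1, hT0, hT1, hv0, hv1]
        rw [map_div₀, map_div₀, map_mul, Complex.conj_I, Complex.conj_ofReal,
          Complex.conj_ofReal, map_one]
        have h42 : (4 + 2 * (s:ℂ)) ≠ 0 := by
          rw [← hN2c]; exact pow_ne_zero _ hNne
        simp only [hval0, hval1, pow_zero, pow_one, one_mul, neg_one_mul]
        field_simp
        rw [hN2c, show (4 + s * 2 : ℝ) = 4 + 2 * s by ring]
        push_cast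
        rw [mul_div_assoc', mul_div_cancel_left₀ _ h42]
        push_cast
        ring
      rw [this, norm_mul, Complex.norm_I, Complex.norm_real, Real.norm_eq_abs, mul_one]
      rw [abs_div, abs_of_nonneg (by linarith : (0:ℝ) ≤ 4 + 2*s),
        abs_of_nonneg (by linarith : (0:ℝ) ≤ 2*(1+s))]
      rw [div_pow, div_eq_iff (by nlinarith : ((4+2*s)^2 : ℝ) ≠ 0)]
      nlinarith
end

section
/- For x, y ∈ ℝ, the vector v ∈ ℂ² with coordinates v(0) = 1 and v(1) = x + yi satisfies: G(v) is biangular if and only if x² + (y-1)² = 2 or x² + (y+1)² = 2. That is, the set C₂ = {v ∈ B₂ : v(0) = 1}, identified with points (x,y) ∈ ℝ², equals the union of the two circles of radius √2 centered at (0,1) and (0,-1). -/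
open scoped ComplexConjugate

/-- for `v = (1, x + y i) ∈ ℂ²`, the Gabor system `G(v)` is biangular
iff `(x, y)` lies on one of the two circles of radius `√2` centered at `(0, ±1)`. -/
theorem cset_two_circles (x y : ℝ) (v : ZMod 2 → ℂ)
    (hv0 : v 0 = 1) (hv1 : v 1 = (x : ℂ) + (y : ℂ) * Complex.I) :
    (∃ α β : ℝ, Biangular 2 v α β) ↔
      (x ^ 2 + (y - 1) ^ 2 = 2 ∨ x ^ 2 + (y + 1) ^ 2 = 2) := by
  have hsum : ∀ w : ZMod 2 → ℂ, inn v w = conj (v 0) * w 0 + conj (v 1) * w 1 := by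
    intro w
    show ∑ j : Fin 2, _ = _
    rw [Fin.sum_univ_two]; rfl
  have hω : Complex.exp (2 * (Real.pi : ℂ) * Complex.I / 2) = -1 := by
    rw [show (2 * (Real.pi : ℂ) * Complex.I / 2) = Real.pi * Complex.I by ring,
      Complex.exp_pi_mul_I]
  have hT : ∀ j : ZMod 2, (gT 2) v j = v (j - 1) := fun j => rfl
  have hM0 : ∀ w : ZMod 2 → ℂ, (gM 2) w 0 = w 0 := by
    intro w; simp [gM]
  have hM1 : ∀ w : ZMod 2 → ℂ, (gM 2) w 1 = -(w 1) := by
    intro w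
    have : ZMod.val (1 : ZMod 2) = 1 := by decide
    simp [gM, this, hω]
  have h01 : (0 : ZMod 2) - 1 = 1 := by decide
  have h11 : (1 : ZMod 2) - 1 = 0 := by decide
  have hc1 : conj (v 1) = (x : ℂ) - (y : ℂ) * Complex.I := by
    rw [hv1]; simp; ring
  -- the three inner products
  have e1 : inn v ((gT 2 ^ 1) v) = ((2 * x : ℝ) : ℂ) := by
    rw [pow_one, hsum, hc1, hT, hT, h01, h11, hv0, hv1]
    simp [Complex.ext_iff]; ring
  have e2 : inn v ((gM 2 ^ 1) ((gT 2 ^ 0) v)) = ((1 - (x ^ 2 + y ^ 2) : ℝ) : ℂ) := by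
    rw [pow_one, pow_zero, show ((1 : (ZMod 2 → ℂ) ≃ₗ[ℂ] (ZMod 2 → ℂ))) v = v from rfl,
      hsum, hM0, hM1, hc1, hv0, hv1]
    simp [Complex.ext_iff, ← Complex.ofReal_pow]; constructor <;> ring
  have e3 : inn v ((gM 2 ^ 1) ((gT 2 ^ 1) v)) = ((2 * y : ℝ) : ℂ) * Complex.I := by
    rw [pow_one, pow_one, hsum, hM0, hM1, hT, hT, h01, h11, hc1, hv0, hv1]
    simp [Complex.ext_iff]; ring
  have a1 : ‖inn v ((gT 2 ^ 1) v)‖ ^ 2 = (2 * x) ^ 2 := by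
    rw [e1, Complex.sq_norm, Complex.normSq_ofReal]; ring
  have a2 : ‖inn v ((gM 2 ^ 1) ((gT 2 ^ 0) v))‖ ^ 2 = (1 - (x ^ 2 + y ^ 2)) ^ 2 := by
    rw [e2, Complex.sq_norm, Complex.normSq_ofReal]; ring
  have a3 : ‖inn v ((gM 2 ^ 1) ((gT 2 ^ 1) v))‖ ^ 2 = (2 * y) ^ 2 := by
    rw [e3, norm_mul, Complex.norm_I, mul_one, Complex.norm_real, Real.norm_eq_abs, sq_abs]
  constructor
  · rintro ⟨α, β, h1, h2⟩
    have hb0 := h2 0 1 (by norm_num) le_rfl le_rfl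
    have hb1 := h2 1 1 le_rfl le_rfl le_rfl
    rw [a2] at hb0; rw [a3] at hb1
    have key : (1 - (x ^ 2 + y ^ 2)) ^ 2 = (2 * y) ^ 2 := by rw [hb0, hb1]
    have hfac : (1 - (x ^ 2 + y ^ 2) - 2 * y) * (1 - (x ^ 2 + y ^ 2) + 2 * y) = 0 := by
      nlinarith [key]
    rcases mul_eq_zero.mp hfac with h | h
    · right; nlinarith
    · left; nlinarith
  · intro h
    refine ⟨(2 * x) ^ 2, (2 * y) ^ 2, ?_, ?_⟩
    · intro k hk1 hk2
      have : k = 1 := by omega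
      subst this; exact a1
    · intro k ℓ hk hl1 hl2
      have hℓ : ℓ = 1 := by omega
      subst hℓ
      interval_cases k
      · rw [a2]; rcases h with h | h <;> nlinarith
      · exact a3
end

section
/- The set B₂ of nonzero vectors v ∈ ℂ² such that G(v) is biangular is path-connected (in the subspace topology inherited from ℂ²). -/
open scoped ComplexConjugate

/-- the set `B₂` of nonzero generators of biangular Gabor systems in `ℂ²`
is path-connected. -/

lemma inn_eval (u w : ZMod 2 → ℂ) : inn u w = conj (u 0) * w 0 + conj (u 1) * w 1 := by
  show ∑ j : ZMod 2, _ = _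
  rw [show (Finset.univ : Finset (ZMod 2)) = {0, 1} by decide]
  simp [Finset.sum_insert, Finset.mem_singleton]

lemma gT_eval (v : ZMod 2 → ℂ) : (gT 2) v = fun j => v (j - 1) := rfl

lemma omega_eq : Complex.exp (2 * Real.pi * Complex.I / 2) = -1 := by
  rw [show (2 * (Real.pi:ℂ) * Complex.I / 2) = Real.pi * Complex.I by ring, Complex.exp_pi_mul_I]

lemma gM_eval (v : ZMod 2 → ℂ) (j : ZMod 2) : (gM 2) v j = (-1 : ℂ) ^ j.val * v j := by
  show Complex.exp (2 * Real.pi * Complex.I / 2) ^ j.val * v j = _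
  rw [omega_eq]

lemma mem_bset_iff (v : ZMod 2 → ℂ) :
    v ∈ Bset 2 ↔ v ≠ 0 ∧
      ((conj (v 0 - v 1) * (v 0 + v 1)).re) ^ 2 = ((conj (v 0 - v 1) * (v 0 + v 1)).im) ^ 2 := by
  have h10 : (1 : ZMod 2) - 1 = 0 := by decide
  have h01 : (0 : ZMod 2) - 1 = 1 := by decide
  have hM : ∀ w : ZMod 2 → ℂ, (gM 2 ^ 1) w = ![w 0, -w 1] := by
    intro w
    funext j
    rw [pow_one]
    fin_cases j
    · exact (gM_eval w 0).trans (by simp)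
    · exact (gM_eval w 1).trans (by simp [show ZMod.val (1:ZMod 2) = 1 from rfl])
  have hT1 : (gT 2 ^ 1) v = ![v 1, v 0] := by
    funext j
    rw [pow_one]
    fin_cases j
    · exact congrArg v h01
    · exact congrArg v h10
  have key1 : inn v ((gM 2 ^ 1) v) = conj (v 0) * v 0 - conj (v 1) * v 1 := by
    rw [inn_eval, pow_one, gM_eval, gM_eval]; simp [show ZMod.val (1:ZMod 2) = 1 from rfl]; ring
  have key2 : inn v ((gM 2 ^ 1) ((gT 2 ^ 1) v)) = conj (v 0) * v 1 - conj (v 1) * v 0 := by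
    rw [inn_eval, pow_one, gM_eval, gM_eval, pow_one, gT_eval]; simp [h01, h10, show ZMod.val (1:ZMod 2) = 1 from rfl]; ring
  have key3 : inn v ((gM 2 ^ 1) ((gT 2 ^ 0) v)) = conj (v 0) * v 0 - conj (v 1) * v 1 := by
    rw [pow_zero]; simpa using key1
  constructor
  · rintro ⟨hv, α, β, h1, h2⟩
    have e1 := h2 0 1 (by norm_num) le_rfl le_rfl
    have e2 := h2 1 1 le_rfl le_rfl le_rfl
    rw [key3] at e1
    rw [key2] at e2
    refine ⟨hv, ?_⟩
    have heq : ‖conj (v 0) * v 0 - conj (v 1) * v 1‖ ^ 2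
        = ‖conj (v 0) * v 1 - conj (v 1) * v 0‖ ^ 2 := e1.trans e2.symm
    simp only [Complex.sq_norm, Complex.normSq_apply, Complex.mul_re, Complex.mul_im,
      Complex.sub_re, Complex.sub_im, Complex.add_re, Complex.add_im,
      Complex.conj_re, Complex.conj_im, map_sub] at heq ⊢
    nlinarith [heq]
  · rintro ⟨hv, h⟩
    refine ⟨hv, ‖inn v ((gT 2 ^ 1) v)‖ ^ 2,
      ‖inn v ((gM 2 ^ 1) v)‖ ^ 2, ?_, ?_⟩
    · intro k hk hk'
      have : k = 1 := by omega
      subst this; rfl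
    · intro k ℓ hk hl hl'
      have : ℓ = 1 := by omega
      subst this
      have hk1 : k = 0 ∨ k = 1 := by omega
      have habs : ‖conj (v 0) * v 0 - conj (v 1) * v 1‖ ^ 2
          = ‖conj (v 0) * v 1 - conj (v 1) * v 0‖ ^ 2 := by
        simp only [Complex.sq_norm, Complex.normSq_apply, Complex.mul_re, Complex.mul_im,
          Complex.sub_re, Complex.sub_im, Complex.add_re, Complex.add_im,
          Complex.conj_re, Complex.conj_im, map_sub] at h ⊢
        nlinarith [h]
      rcases hk1 with hk1 | hk1 <;> subst hk1
      · rw [key3, key1]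
      · rw [key2, key1, ← habs]


lemma joinedIn_of {X : Type*} [TopologicalSpace X] {s : Set X} {x y : X} (γ : ℝ → X)
    (hc : Continuous γ) (h0 : γ 0 = x) (h1 : γ 1 = y)
    (hm : ∀ t : ℝ, 0 ≤ t → t ≤ 1 → γ t ∈ s) : JoinedIn s x y :=
  ⟨{ toFun := fun t => γ (t : ℝ),
     continuous_toFun := hc.comp continuous_subtype_val,
     source' := by simpa using h0,
     target' := by simpa using h1 }, fun t => hm t t.2.1 t.2.2⟩

def Scond (z : ℂ × ℂ) : Prop := ((conj z.2 * z.1).re) ^ 2 = ((conj z.2 * z.1).im) ^ 2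

def Sset : Set (ℂ × ℂ) := {z | z ≠ 0 ∧ Scond z}

noncomputable def cpath (a : ℂ) (t : ℝ) : ℂ :=
  (((1 - t) + t * ‖a‖ : ℝ) : ℂ) * Complex.exp ((Complex.arg a * t : ℝ) * Complex.I)

lemma cpath_cont (a : ℂ) : Continuous (cpath a) := by
  unfold cpath
  fun_prop

lemma cpath_zero (a : ℂ) : cpath a 0 = 1 := by simp [cpath]

lemma cpath_one (a : ℂ) : cpath a 1 = a := by
  simp only [cpath]
  push_cast
  rw [show ((1:ℂ) - 1 + 1 * (‖a‖ : ℂ)) = (‖a‖ : ℂ) by ring,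
    show ((Complex.arg a : ℂ) * 1 * Complex.I) = Complex.arg a * Complex.I by ring]
  exact Complex.norm_mul_exp_arg_mul_I a

lemma cpath_ne_zero (a : ℂ) (ha : a ≠ 0) (t : ℝ) (h0 : 0 ≤ t) (h1 : t ≤ 1) :
    cpath a t ≠ 0 := by
  apply mul_ne_zero
  · rw [Ne, Complex.ofReal_eq_zero]
    have : 0 < ‖a‖ := norm_pos_iff.mpr ha
    nlinarith [mul_nonneg h0 this.le, mul_nonneg (sub_nonneg.2 h1) this.le]
  · exact Complex.exp_ne_zero _

lemma joinedA {z : ℂ × ℂ} (hz : z ∈ Sset) (h1 : z.1 ≠ 0) : JoinedIn Sset (1, 0) z := by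
  have step2 : JoinedIn Sset (1, 0) (z.1, 0) := by
    apply joinedIn_of (fun t => (cpath z.1 t, 0))
    · exact (cpath_cont z.1).prodMk continuous_const
    · simp [cpath_zero]
    · simp [cpath_one]
    · intro t ht0 ht1
      refine ⟨?_, ?_⟩
      · simp [Prod.ext_iff, cpath_ne_zero z.1 h1 t ht0 ht1]
      · simp [Scond]
  have step1 : JoinedIn Sset (z.1, 0) z := by
    apply joinedIn_of (fun t => (z.1, (t : ℂ) * z.2))
    · fun_prop
    · simp
    · simp
    · intro t ht0 ht1
      constructor
      · simp [Prod.ext_iff, h1]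
      · have hc := hz.2
        simp only [Scond, map_mul, Complex.conj_ofReal] at hc ⊢
        rw [mul_assoc]
        simp only [Complex.re_ofReal_mul, Complex.im_ofReal_mul]
        rw [mul_pow, mul_pow, hc]
  exact step2.trans step1

lemma sset_pathConnected : IsPathConnected Sset := by
  refine ⟨(1, 0), ⟨by simp [Prod.ext_iff], by simp [Scond]⟩, ?_⟩
  intro z hz
  by_cases h1 : z.1 ≠ 0
  · exact joinedA hz h1
  · push_neg at h1
    have h2 : z.2 ≠ 0 := by
      intro h2
      exact hz.1 (Prod.ext h1 h2)
    have hw : (z.2 * (1 + Complex.I), z.2) ∈ Sset := by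
      constructor
      · simp [Prod.ext_iff, h2]
      · simp only [Scond]
        rw [show conj z.2 * (z.2 * (1 + Complex.I)) = (Complex.normSq z.2 : ℝ) * (1 + Complex.I) by
          rw [Complex.normSq_eq_conj_mul_self]; ring]
        simp [Complex.re_ofReal_mul, Complex.im_ofReal_mul]
    have stepB : JoinedIn Sset (z.2 * (1 + Complex.I), z.2) z := by
      apply joinedIn_of (fun t => ((1 - (t:ℂ)) * (z.2 * (1 + Complex.I)), z.2))
      · fun_prop
      · simp
      · simp [h1, Prod.ext_iff]
      · intro t ht0 ht1
        constructor
        · simp [Prod.ext_iff, h2]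
        · simp only [Scond]
          rw [show conj z.2 * ((1 - (t:ℂ)) * (z.2 * (1 + Complex.I)))
              = ((1 - t : ℝ) : ℂ) * ((Complex.normSq z.2 : ℝ) * (1 + Complex.I)) by
            rw [Complex.normSq_eq_conj_mul_self]; push_cast; ring]
          simp [Complex.re_ofReal_mul, Complex.im_ofReal_mul]
    refine (joinedA hw ?_).trans stepB
    simp only [ne_eq, mul_eq_zero, not_or]
    refine ⟨h2, fun h => ?_⟩
    rw [Complex.ext_iff] at h
    simp at h

noncomputable def fmap (z : ℂ × ℂ) : ZMod 2 → ℂ :=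
  fun j => if j = 0 then (z.1 + z.2) / 2 else (z.1 - z.2) / 2

lemma fmap_cont : Continuous fmap := by
  apply continuous_pi
  intro j
  by_cases h : j = 0 <;> simp only [fmap, h, if_true, if_false] <;> fun_prop

lemma fmap_zero (z : ℂ × ℂ) : fmap z 0 = (z.1 + z.2) / 2 := if_pos rfl
lemma fmap_one (z : ℂ × ℂ) : fmap z 1 = (z.1 - z.2) / 2 := if_neg (by decide)

-- stand-in for mem_bset_iff condition
def Bcond (v : ZMod 2 → ℂ) : Prop :=
  ((conj (v 0 - v 1) * (v 0 + v 1)).re) ^ 2 = ((conj (v 0 - v 1) * (v 0 + v 1)).im) ^ 2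

lemma image_eq : {v : ZMod 2 → ℂ | v ≠ 0 ∧ Bcond v} = fmap '' Sset := by
  ext v
  constructor
  · rintro ⟨hv, hc⟩
    refine ⟨(v 0 + v 1, v 0 - v 1), ⟨?_, ?_⟩, ?_⟩
    · intro h
      rw [Prod.ext_iff] at h
      obtain ⟨h1, h2⟩ := h
      simp only [Prod.fst_zero] at h1
      simp only [Prod.snd_zero] at h2
      apply hv
      funext j
      fin_cases j
      · show v 0 = 0
        linear_combination (h1 + h2) / 2
      · show v 1 = 0
        linear_combination (h1 - h2) / 2
    · exact hc
    · funext j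
      fin_cases j
      · show fmap (v 0 + v 1, v 0 - v 1) 0 = v 0
        rw [fmap_zero]; ring
      · show fmap (v 0 + v 1, v 0 - v 1) 1 = v 1
        rw [fmap_one]; ring
  · rintro ⟨z, ⟨hz, hc⟩, rfl⟩
    have e0 : fmap z 0 = (z.1 + z.2) / 2 := fmap_zero z
    have e1 : fmap z 1 = (z.1 - z.2) / 2 := fmap_one z
    have eq1 : fmap z 0 - fmap z 1 = z.2 := by rw [e0, e1]; ring
    have eq2 : fmap z 0 + fmap z 1 = z.1 := by rw [e0, e1]; ring
    constructor
    · intro h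
      apply hz
      have h0 : fmap z 0 = 0 := by rw [h]; rfl
      have h1 : fmap z 1 = 0 := by rw [h]; rfl
      rw [Prod.ext_iff]
      constructor
      · rw [← eq2, h0, h1]; simp
      · rw [← eq1, h0, h1]; simp
    · unfold Bcond
      rw [eq1, eq2]
      exact hc


theorem bset_two_pathConnected : IsPathConnected (Bset 2) := by
  have h : Bset 2 = {v : ZMod 2 → ℂ | v ≠ 0 ∧ Bcond v} := by
    ext v
    rw [Set.mem_setOf_eq, mem_bset_iff]
    rfl
  rw [h, image_eq]
  exact sset_pathConnected.image fmap_cont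
end

section
/- Let d ≥ 2. Suppose there exist unit-norm vectors v₀, v₁ ∈ ℂ^d and real numbers α₀, α₁ such that: (i) G(v_j) is (α_j, (1-α_j)/d)-biangular for each j ∈ {0,1}; (ii) v₀ and v₁ are joined by a continuous path lying in B_d (the set of nonzero generators of biangular Gabor systems); and (iii) α₀ < 1/(d+1) < α₁. Then there exists a unit-norm vector w ∈ ℂ^d such that |⟨w, M^ℓ T^k w⟩|² = 1/(d+1) for all (k,ℓ) ∈ {0,…,d-1}² with (k,ℓ) ≠ (0,0); that is, there exists a SIC in ℂ^d. -/
open scoped ComplexConjugate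

namespace SicAux

/-- The primitive `d`-th root of unity used by `gM`. -/
noncomputable def ww (d : ℕ) : ℂ := Complex.exp (2 * Real.pi * Complex.I / d)

lemma gT_pow_apply (d k : ℕ) (v : ZMod d → ℂ) (j : ZMod d) : ((gT d ^ k) v) j = v (j - k) := by
  induction k generalizing v j with
  | zero => simp
  | succ n ih =>
    rw [pow_succ]
    show ((gT d ^ n) (gT d v)) j = _
    rw [ih]
    show v (j - n - 1) = _
    congr 1
    push_cast
    ring

lemma gM_pow_apply (d ℓ : ℕ) (v : ZMod d → ℂ) (j : ZMod d) :
    ((gM d ^ ℓ) v) j = ww d ^ (j.val * ℓ) * v j := by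
  induction ℓ generalizing v with
  | zero => simp
  | succ n ih =>
    rw [pow_succ]
    show ((gM d ^ n) (gM d v)) j = _
    rw [ih]
    show _ * (_ * v j) = _
    rw [Units.val_mk0, ← mul_assoc,
      show Complex.exp (2 * Real.pi * Complex.I / d) ^ j.val = ww d ^ j.val from rfl,
      ← pow_add]
    congr 2

lemma conj_ww (d : ℕ) : conj (ww d) = (ww d)⁻¹ := by
  rw [ww, ← Complex.exp_conj, ← Complex.exp_neg]
  congr 1
  simp only [map_div₀, map_mul, Complex.conj_I, Complex.conj_ofReal, map_ofNat,
    Complex.conj_natCast]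
  ring

lemma ww_prim (d : ℕ) [NeZero d] : IsPrimitiveRoot (ww d) d :=
  Complex.isPrimitiveRoot_exp d (NeZero.ne d)

lemma orth (d : ℕ) [NeZero d] (j j' : ZMod d) :
    ∑ ℓ ∈ Finset.range d, ww d ^ (j.val * ℓ) * conj (ww d ^ (j'.val * ℓ))
      = if j = j' then (d : ℂ) else 0 := by
  have hprim := ww_prim d
  have hne : ww d ≠ 0 := by rw [ww]; exact Complex.exp_ne_zero _
  set ζ : ℂ := ww d ^ j.val * (ww d ^ j'.val)⁻¹ with hζ
  have hterm : ∀ ℓ, ww d ^ (j.val * ℓ) * conj (ww d ^ (j'.val * ℓ)) = ζ ^ ℓ := by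
    intro ℓ
    rw [map_pow, conj_ww, hζ, mul_pow, ← pow_mul, inv_pow, inv_pow, ← pow_mul]
  rw [Finset.sum_congr rfl fun ℓ _ => hterm ℓ]
  by_cases h : j = j'
  · simp [h, hζ, mul_inv_cancel₀ (pow_ne_zero _ hne)]
  · have hζ1 : ζ ≠ 1 := by
      intro hc
      apply h
      have : ww d ^ j.val = ww d ^ j'.val := by
        rw [hζ] at hc
        exact (mul_inv_eq_one₀ (pow_ne_zero _ hne)).mp hc
      exact ZMod.val_injective d (hprim.pow_inj (ZMod.val_lt j) (ZMod.val_lt j') this)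
    have hζd : ζ ^ d = 1 := by
      rw [hζ, mul_pow, ← pow_mul, inv_pow, ← pow_mul, mul_comm j.val, mul_comm j'.val,
        pow_mul, pow_mul, hprim.pow_eq_one, one_pow, one_pow, inv_one, mul_one]
    rw [if_neg h, geom_sum_eq hζ1, hζd]
    simp

lemma parseval (d : ℕ) [NeZero d] (a : ZMod d → ℂ) :
    ∑ ℓ ∈ Finset.range d, Complex.normSq (∑ j : ZMod d, ww d ^ (j.val * ℓ) * a j)
      = d * ∑ j : ZMod d, Complex.normSq (a j) := by
  have key : (↑(∑ ℓ ∈ Finset.range d, Complex.normSq (∑ j : ZMod d, ww d ^ (j.val * ℓ) * a j)) : ℂ)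
      = ↑((d : ℝ) * ∑ j : ZMod d, Complex.normSq (a j)) := by
    push_cast
    rw [← Complex.ofReal_natCast]
    push_cast
    calc (∑ ℓ ∈ Finset.range d, (Complex.normSq (∑ j : ZMod d, ww d ^ (j.val * ℓ) * a j) : ℂ))
        = ∑ ℓ ∈ Finset.range d, (∑ j : ZMod d, ww d ^ (j.val * ℓ) * a j) *
            conj (∑ j' : ZMod d, ww d ^ (j'.val * ℓ) * a j') := by
          refine Finset.sum_congr rfl fun ℓ _ => ?_
          rw [Complex.mul_conj]
      _ = ∑ ℓ ∈ Finset.range d, ∑ j : ZMod d, ∑ j' : ZMod d,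
            (a j * conj (a j')) * (ww d ^ (j.val * ℓ) * conj (ww d ^ (j'.val * ℓ))) := by
          refine Finset.sum_congr rfl fun ℓ _ => ?_
          rw [map_sum, Finset.sum_mul_sum]
          refine Finset.sum_congr rfl fun j _ => Finset.sum_congr rfl fun j' _ => ?_
          rw [map_mul]
          ring
      _ = ∑ j : ZMod d, ∑ j' : ZMod d,
            (a j * conj (a j')) * ∑ ℓ ∈ Finset.range d,
              (ww d ^ (j.val * ℓ) * conj (ww d ^ (j'.val * ℓ))) := by
          rw [Finset.sum_comm]
          refine Finset.sum_congr rfl fun j _ => ?_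
          rw [Finset.sum_comm]
          refine Finset.sum_congr rfl fun j' _ => ?_
          rw [Finset.mul_sum]
      _ = ∑ j : ZMod d, (a j * conj (a j)) * d := by
          refine Finset.sum_congr rfl fun j _ => ?_
          rw [Finset.sum_eq_single j]
          · rw [orth, if_pos rfl]
          · intro j' _ hne
            rw [orth, if_neg (Ne.symm hne), mul_zero]
          · intro h; exact absurd (Finset.mem_univ j) h
      _ = (d : ℂ) * ∑ j : ZMod d, (Complex.normSq (a j) : ℂ) := by
          rw [Finset.mul_sum]
          refine Finset.sum_congr rfl fun j _ => ?_
          rw [Complex.mul_conj]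
          ring
  exact_mod_cast key

lemma zsum (d : ℕ) [NeZero d] {M : Type*} [AddCommMonoid M] (f : ZMod d → M) :
    ∑ k ∈ Finset.range d, f (k : ZMod d) = ∑ i : ZMod d, f i := by
  refine Finset.sum_nbij' (fun k => (k : ZMod d)) (fun i => i.val) ?_ ?_ ?_ ?_ ?_ <;>
    simp +contextual [Nat.mod_eq_of_lt, ZMod.val_lt, ZMod.val_cast_of_lt, ZMod.natCast_val]

lemma inn_formula (d : ℕ) [NeZero d] (v : ZMod d → ℂ) (k ℓ : ℕ) :
    inn v ((gM d ^ ℓ) ((gT d ^ k) v))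
      = ∑ j : ZMod d, ww d ^ (j.val * ℓ) * (conj (v j) * v (j - k)) := by
  refine Finset.sum_congr rfl fun j _ => ?_
  rw [gM_pow_apply, gT_pow_apply]
  ring

lemma frame (d : ℕ) [NeZero d] (v : ZMod d → ℂ) :
    ∑ k ∈ Finset.range d, ∑ ℓ ∈ Finset.range d,
        ‖inn v ((gM d ^ ℓ) ((gT d ^ k) v))‖ ^ 2
      = d * (∑ j : ZMod d, Complex.normSq (v j)) ^ 2 := by
  have step1 : ∀ k ∈ Finset.range d,
      ∑ ℓ ∈ Finset.range d, ‖inn v ((gM d ^ ℓ) ((gT d ^ k) v))‖ ^ 2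
        = d * ∑ j : ZMod d, Complex.normSq (v j) * Complex.normSq (v (j - k)) := by
    intro k _
    have : ∀ ℓ ∈ Finset.range d,
        ‖inn v ((gM d ^ ℓ) ((gT d ^ k) v))‖ ^ 2
          = Complex.normSq (∑ j : ZMod d, ww d ^ (j.val * ℓ) * (conj (v j) * v (j - k))) := by
      intro ℓ _
      rw [Complex.sq_norm, inn_formula]
    rw [Finset.sum_congr rfl this, parseval]
    congr 1
    refine Finset.sum_congr rfl fun j _ => ?_
    rw [map_mul, Complex.normSq_conj]
  rw [Finset.sum_congr rfl step1, ← Finset.mul_sum]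
  congr 1
  rw [Finset.sum_comm, sq, Finset.sum_mul]
  refine Finset.sum_congr rfl fun j _ => ?_
  rw [← Finset.mul_sum]
  congr 1
  rw [zsum d (fun i => Complex.normSq (v (j - i)))]
  exact Equiv.sum_comp (Equiv.subLeft j) fun i => Complex.normSq (v i)

lemma inn_self (d : ℕ) [NeZero d] (v : ZMod d → ℂ) :
    inn v v = ((∑ j : ZMod d, Complex.normSq (v j) : ℝ) : ℂ) := by
  push_cast
  refine Finset.sum_congr rfl fun j _ => ?_
  rw [← Complex.mul_conj]
  ring

lemma inn_smul (d : ℕ) [NeZero d] (c : ℂ) (u x : ZMod d → ℂ) :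
    inn (c • u) (c • x) = conj c * c * inn u x := by
  simp only [inn, Pi.smul_apply, smul_eq_mul, map_mul, Finset.mul_sum]
  exact Finset.sum_congr rfl fun j _ => by ring

end SicAux

/-- if two unit-norm biangular generators with angles on opposite sides of
`1 / (d + 1)` are joined by a path inside `B_d`, then a SIC exists in `ℂ^d`. -/
theorem sic_of_path_between_biangular (d : ℕ) [NeZero d] (hd : 2 ≤ d)
    (v₀ v₁ : ZMod d → ℂ) (α₀ α₁ : ℝ)
    (hn₀ : ∑ j, ‖v₀ j‖ ^ 2 = 1) (hn₁ : ∑ j, ‖v₁ j‖ ^ 2 = 1)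
    (hb₀ : Biangular d v₀ α₀ ((1 - α₀) / d)) (hb₁ : Biangular d v₁ α₁ ((1 - α₁) / d))
    (hpath : JoinedIn (Bset d) v₀ v₁)
    (hα₀ : α₀ < 1 / (d + 1)) (hα₁ : 1 / (d + 1) < α₁) :
    ∃ w : ZMod d → ℂ, (∑ j, ‖w j‖ ^ 2 = 1) ∧
      ∀ k ℓ : ℕ, k ≤ d - 1 → ℓ ≤ d - 1 → ¬(k = 0 ∧ ℓ = 0) →
        ‖inn w ((gM d ^ ℓ) ((gT d ^ k) w))‖ ^ 2 = 1 / (d + 1) := by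
  classical
  obtain ⟨γ, hγ⟩ := hpath
  -- the continuous "first angle" function along the path
  set N : (ZMod d → ℂ) → ℝ := fun v => ∑ j : ZMod d, Complex.normSq (v j) with hN
  have hNpos : ∀ t : unitInterval, 0 < N (γ t) := by
    intro t
    have hvne : γ t ≠ 0 := (hγ t).1
    obtain ⟨j₀, hj₀⟩ := Function.ne_iff.mp hvne
    refine Finset.sum_pos' (fun j _ => Complex.normSq_nonneg _) ⟨j₀, Finset.mem_univ _, ?_⟩
    exact Complex.normSq_pos.mpr hj₀
  set F : unitInterval → ℝ := fun t =>
    ‖inn (γ t) ((gT d ^ 1) (γ t))‖ ^ 2 / (N (γ t)) ^ 2 with hF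
  have hinn_eq : ∀ t : unitInterval,
      inn (γ t) ((gT d ^ 1) (γ t)) = ∑ j : ZMod d, conj (γ t j) * (γ t (j - 1)) := by
    intro t
    rw [pow_one]
    rfl
  have hFcont : Continuous F := by
    have hγc : Continuous fun t : unitInterval => γ t := γ.continuous
    have hnum : Continuous fun t : unitInterval =>
        ‖inn (γ t) ((gT d ^ 1) (γ t))‖ ^ 2 := by
      have : Continuous fun t : unitInterval => inn (γ t) ((gT d ^ 1) (γ t)) := by
        simp only [hinn_eq]
        refine continuous_finset_sum _ fun j _ => ?_
        exact (Complex.continuous_conj.comp ((continuous_apply j).comp hγc)).mul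
          ((continuous_apply (j - 1)).comp hγc)
      exact (continuous_norm.comp this).pow 2
    have hden : Continuous fun t : unitInterval => (N (γ t)) ^ 2 := by
      refine Continuous.pow ?_ 2
      exact continuous_finset_sum _ fun j _ =>
        Complex.continuous_normSq.comp ((continuous_apply j).comp hγc)
    exact hnum.div hden fun t => pow_ne_zero 2 (hNpos t).ne'
  -- values at endpoints
  have habsn : ∀ v : ZMod d → ℂ, (∑ j, ‖v j‖ ^ 2) = N v := by
    intro v
    exact Finset.sum_congr rfl fun j _ => Complex.sq_norm _
  have h1d : 1 ≤ d - 1 := by omega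
  have hF0 : F 0 = α₀ := by
    simp only [hF]
    rw [γ.source]
    rw [hb₀.1 1 le_rfl h1d, ← habsn v₀, hn₀]
    norm_num
  have hF1 : F 1 = α₁ := by
    simp only [hF]
    rw [γ.target]
    rw [hb₁.1 1 le_rfl h1d, ← habsn v₁, hn₁]
    norm_num
  -- intermediate value
  have hmem : (1 / ((d : ℝ) + 1)) ∈ Set.Icc (F 0) (F 1) := by
    rw [hF0, hF1]
    exact ⟨hα₀.le, hα₁.le⟩
  obtain ⟨t, ht⟩ := intermediate_value_univ (0 : unitInterval) 1 hFcont hmem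
  set v : ZMod d → ℂ := γ t with hv
  obtain ⟨hvne, α, β, hb⟩ := hγ t
  set n : ℝ := N v with hn
  have hnpos : 0 < n := hNpos t
  have hd1 : (1 : ℝ) ≤ (d : ℝ) := by exact_mod_cast Nat.one_le_of_lt hd
  have hdpos : (0 : ℝ) < d := by positivity
  have hd1pos : (0 : ℝ) < (d : ℝ) + 1 := by positivity
  -- α = n² / (d+1)
  have hα : α * ((d : ℝ) + 1) = n ^ 2 := by
    have hFt : ‖inn v ((gT d ^ 1) v)‖ ^ 2 / n ^ 2 = 1 / ((d : ℝ) + 1) := ht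
    rw [hb.1 1 le_rfl h1d] at hFt
    have := (div_eq_div_iff (by positivity) (by positivity)).mp hFt
    linarith
  -- frame identity evaluated via biangularity
  have hframe := SicAux.frame d v
  have hIco : ∀ k ∈ Finset.range d,
      ∑ ℓ ∈ Finset.range d, ‖inn v ((gM d ^ ℓ) ((gT d ^ k) v))‖ ^ 2
        = ‖inn v ((gT d ^ k) v)‖ ^ 2 + ((d : ℝ) - 1) * β := by
    intro k hk
    have hk' : k ≤ d - 1 := by
      have := Finset.mem_range.mp hk; omega
    have hsplit : Finset.range d = insert 0 (Finset.Ico 1 d) := by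
      ext m
      simp [Finset.mem_Ico, Finset.mem_range]
      omega
    rw [hsplit, Finset.sum_insert (by simp)]
    have hβ : ∀ ℓ ∈ Finset.Ico 1 d,
        ‖inn v ((gM d ^ ℓ) ((gT d ^ k) v))‖ ^ 2 = β := by
      intro ℓ hℓ
      obtain ⟨h1, h2⟩ := Finset.mem_Ico.mp hℓ
      exact hb.2 k ℓ hk' h1 (by omega)
    rw [Finset.sum_congr rfl hβ, Finset.sum_const, Nat.card_Ico, nsmul_eq_mul]
    have : ((d - 1 : ℕ) : ℝ) = (d : ℝ) - 1 := by
      have : 1 ≤ d := by omega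
      push_cast [Nat.cast_sub this]
      ring
    rw [this]
    congr 1
  rw [Finset.sum_congr rfl hIco] at hframe
  have hk0 : ∀ k ∈ Finset.range d, ‖inn v ((gT d ^ k) v)‖ ^ 2
      = if k = 0 then n ^ 2 else α := by
    intro k hk
    by_cases h : k = 0
    · subst h
      rw [if_pos rfl, pow_zero]
      have : inn v ((1 : (ZMod d → ℂ) ≃ₗ[ℂ] (ZMod d → ℂ)) v) = inn v v := rfl
      rw [this, SicAux.inn_self]
      rw [Complex.norm_real, Real.norm_of_nonneg hnpos.le]
    · rw [if_neg h]
      exact hb.1 k (by omega) (by have := Finset.mem_range.mp hk; omega)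
  have hcast : ((d - 1 : ℕ) : ℝ) = (d : ℝ) - 1 := by
    have : 1 ≤ d := by omega
    push_cast [Nat.cast_sub this]
    ring
  have hsplit : Finset.range d = insert 0 (Finset.Ico 1 d) := by
    ext m
    simp [Finset.mem_Ico, Finset.mem_range]
    omega
  have hsum2 : ∑ k ∈ Finset.range d,
      (‖inn v ((gT d ^ k) v)‖ ^ 2 + ((d : ℝ) - 1) * β)
        = n ^ 2 + ((d : ℝ) - 1) * α + (d : ℝ) * (((d : ℝ) - 1) * β) := by
    rw [Finset.sum_add_distrib, Finset.sum_congr rfl hk0, hsplit,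
      Finset.sum_insert (by simp), if_pos rfl]
    have hrest : ∀ k ∈ Finset.Ico 1 d, (if k = 0 then n ^ 2 else α) = α := by
      intro k hk
      rw [if_neg (by have := (Finset.mem_Ico.mp hk).1; omega)]
    rw [Finset.sum_congr rfl hrest, Finset.sum_const, Finset.sum_const, Nat.card_Ico,
      Finset.card_insert_of_notMem (by simp), Nat.card_Ico, nsmul_eq_mul, nsmul_eq_mul,
      hcast]
    push_cast
    simp only [hcast]
    ring
  rw [hsum2] at hframe
  -- hframe : n² + (d-1)α + d((d-1)β) = d n²
  have hdne : (d : ℝ) - 1 ≠ 0 := by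
    have : (2 : ℝ) ≤ (d : ℝ) := by exact_mod_cast hd
    linarith
  have h4 : α + (d : ℝ) * β = n ^ 2 := by
    have h3 : ((d : ℝ) - 1) * (α + (d : ℝ) * β) = ((d : ℝ) - 1) * n ^ 2 := by
      linear_combination hframe
    exact mul_left_cancel₀ hdne h3
  have hβval : β * ((d : ℝ) + 1) = n ^ 2 := by
    have h6 : (d : ℝ) * (β * ((d : ℝ) + 1)) = (d : ℝ) * n ^ 2 := by
      linear_combination ((d : ℝ) + 1) * h4 - hα
    exact mul_left_cancel₀ hdpos.ne' h6
  -- normalize v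
  set c : ℂ := Complex.ofReal (Real.sqrt n)⁻¹ with hc
  set w : ZMod d → ℂ := c • v with hw
  have hcc : conj c * c = ((n⁻¹ : ℝ) : ℂ) := by
    rw [hc, Complex.conj_ofReal, ← Complex.ofReal_mul, ← mul_inv,
      Real.mul_self_sqrt hnpos.le]
  refine ⟨w, ?_, ?_⟩
  · rw [habsn]
    have : N w = n⁻¹ * n := by
      rw [hN]
      simp only [hw, Pi.smul_apply, smul_eq_mul, map_mul]
      rw [← Finset.mul_sum]
      congr 1
      rw [hc, Complex.normSq_ofReal, ← mul_inv, Real.mul_self_sqrt hnpos.le]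
    rw [this, inv_mul_cancel₀ hnpos.ne']
  · intro k ℓ hk hℓ hkℓ
    have hsm : inn w ((gM d ^ ℓ) ((gT d ^ k) w)) =
        ((n⁻¹ : ℝ) : ℂ) * inn v ((gM d ^ ℓ) ((gT d ^ k) v)) := by
      rw [hw, map_smul, map_smul, SicAux.inn_smul, hcc]
    have habs2 : ‖inn w ((gM d ^ ℓ) ((gT d ^ k) w))‖ ^ 2
        = (n⁻¹) ^ 2 * ‖inn v ((gM d ^ ℓ) ((gT d ^ k) v))‖ ^ 2 := by
      rw [hsm, norm_mul, mul_pow, Complex.norm_real, Real.norm_of_nonneg (by positivity)]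
    rw [habs2]
    by_cases hℓ0 : ℓ = 0
    · subst hℓ0
      have hk1 : 1 ≤ k := by omega
      have : ‖inn v ((gM d ^ 0) ((gT d ^ k) v))‖ ^ 2 = α := by
        rw [pow_zero]
        have h1 : inn v ((1 : (ZMod d → ℂ) ≃ₗ[ℂ] (ZMod d → ℂ)) ((gT d ^ k) v))
            = inn v ((gT d ^ k) v) := rfl
        rw [h1]
        exact hb.1 k hk1 hk
      rw [this]
      rw [eq_div_iff hd1pos.ne']
      have hn2 : n ^ 2 ≠ 0 := by positivity
      field_simp
      linarith [hα]
    · have : ‖inn v ((gM d ^ ℓ) ((gT d ^ k) v))‖ ^ 2 = β :=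
        hb.2 k ℓ hk (by omega) hℓ
      rw [this]
      rw [eq_div_iff hd1pos.ne']
      field_simp
      linarith [hβval]
end
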